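/- arXiv:1604.08053 — 2 statements merged into one kernel-verified Lean document; each statement's English description precedes it below -/
import Mathlib

section
/- Let (G, σ) be a flow-admissible signed cubic graph with exactly two negative edges n₁ and n₂. If G is 3-edge-colorable, then (G, σ) admits a nowhere-zero 6-flow (D, φ) with φ(n₁) = φ(n₂) = 1. -/
open Finset SimpleGraph

attribute [local instance] Classical.propDecidable

variable {V : Type}

/-- `σ` is a valid `±1` signature on the edges of `G`. -/
def IsSignature (G : SimpleGraph V) (σ : Sym2 V → ℤ) : Prop :=
  ∀ e ∈ G.edgeSet, σ e = 1 ∨ σ e = -1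

/-- The set of negative edges of the signed graph `(G, σ)`. -/
def NegEdges (G : SimpleGraph V) (σ : Sym2 V → ℤ) : Set (Sym2 V) :=
  {e | e ∈ G.edgeSet ∧ σ e = -1}

/-- A bidirected orientation of the signed graph `(G, σ)`: `τ v e = 1` means that the
half-edge of `e` at `v` points towards `v`, and `τ v e = -1` that it points away from `v`.
On a positive edge the two half-edges are directed consistently, while on a negative edge
both half-edges point outwards (extroverted) or both point inwards (introverted). -/
def IsOrientation (G : SimpleGraph V) (σ : Sym2 V → ℤ) (τ : V → Sym2 V → ℤ) : Prop :=
  (∀ v e, τ v e = 1 ∨ τ v e = -1) ∧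
  ∀ u v, G.Adj u v → τ u s(u, v) * τ v s(u, v) = - σ s(u, v)

/-- `(τ, φ)` is an integer-valued flow on the signed graph `(G, σ)`:
Kirchhoff's law holds at every vertex. -/
def IsFlow [Fintype V] (G : SimpleGraph V) (σ : Sym2 V → ℤ)
    (τ : V → Sym2 V → ℤ) (φ : Sym2 V → ℤ) : Prop :=
  IsOrientation G σ τ ∧
    ∀ v : V, (∑ w : V, if G.Adj v w then τ v s(v, w) * φ s(v, w) else 0) = 0

/-- `(τ, φ)` is a nowhere-zero `k`-flow on `(G, σ)`. -/
def IsNZFlow [Fintype V] (G : SimpleGraph V) (σ : Sym2 V → ℤ) (k : ℤ)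
    (τ : V → Sym2 V → ℤ) (φ : Sym2 V → ℤ) : Prop :=
  IsFlow G σ τ φ ∧ ∀ e ∈ G.edgeSet, 0 < |φ e| ∧ |φ e| < k

/-- A signed graph is flow-admissible if it admits a nowhere-zero `k`-flow for some `k`. -/
def FlowAdmissible [Fintype V] (G : SimpleGraph V) (σ : Sym2 V → ℤ) : Prop :=
  ∃ (k : ℤ) (τ : V → Sym2 V → ℤ) (φ : Sym2 V → ℤ), IsNZFlow G σ k τ φ

/-- The flow number `F(G, σ)`: the least `k` admitting a nowhere-zero `k`-flow. -/
noncomputable def flowNumber [Fintype V] (G : SimpleGraph V) (σ : Sym2 V → ℤ) : ℕ :=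
  sInf {k : ℕ | ∃ τ φ, IsNZFlow G σ (k : ℤ) τ φ}

/-- An edge-cut of `G`: the set of edges crossing a nontrivial vertex partition. -/
def IsEdgeCut (G : SimpleGraph V) (X : Set (Sym2 V)) : Prop :=
  ∃ S : Set V, S.Nonempty ∧ Sᶜ.Nonempty ∧
    X = {e | e ∈ G.edgeSet ∧ ∃ a ∈ S, ∃ b ∈ Sᶜ, e = s(a, b)}

/-- The all-positive signature. -/
def allPos : Sym2 V → ℤ := fun _ => 1

/-- `G` is cubic (3-regular). -/
def CubicGraph (G : SimpleGraph V) : Prop := ∀ v : V, (G.neighborSet v).ncard = 3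

/-- `G` has no bridge. -/
def Bridgeless (G : SimpleGraph V) : Prop := ∀ e ∈ G.edgeSet, ¬ G.IsBridge e

/-- A walk is directed (with respect to the orientation `τ` of `(G, σ)`) if every dart of
the walk traverses a positive edge in the direction of its orientation. -/
def IsDirectedWalk {G : SimpleGraph V} (σ : Sym2 V → ℤ) (τ : V → Sym2 V → ℤ) {u v : V}
    (p : G.Walk u v) : Prop :=
  ∀ d ∈ p.darts, σ s(d.toProd.1, d.toProd.2) = 1 ∧
    τ d.toProd.2 s(d.toProd.1, d.toProd.2) = 1

/-- `M` is a perfect matching (1-factor) of `G`. -/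
def IsPM (G : SimpleGraph V) (M : Set (Sym2 V)) : Prop :=
  M ⊆ G.edgeSet ∧ ∀ v : V, ∃! e, e ∈ M ∧ v ∈ e

/-- `c` is a proper 3-edge-coloring of `G`. -/
def IsProper3EdgeColoring (G : SimpleGraph V) (c : Sym2 V → Fin 3) : Prop :=
  ∀ e₁ ∈ G.edgeSet, ∀ e₂ ∈ G.edgeSet, e₁ ≠ e₂ → (∃ w, w ∈ e₁ ∧ w ∈ e₂) → c e₁ ≠ c e₂


-- ===================== helpers ==================

/-- For a fixed-point-free involution `F` there is a `±1` function anti-invariant under `F`. -/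
lemma pairing_choice {α : Type*} (F : α → α) (hinv : ∀ a, F (F a) = a)
    (hfpf : ∀ a, F a ≠ a) :
    ∃ χ : α → ℤ, (∀ a, χ a = 1 ∨ χ a = -1) ∧ ∀ a, χ (F a) = -χ a := by
  classical
  let r : α → α → Prop := fun a b => b = a ∨ b = F a
  have requiv : Equivalence r := by
    constructor
    · intro a; exact Or.inl rfl
    · intro a b h; rcases h with h | h
      · exact Or.inl h.symm
      · subst h; exact Or.inr (hinv a).symm
    · intro a b c hab hbc
      rcases hab with h | h <;> rcases hbc with h' | h'
      · exact Or.inl (h'.trans h)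
      · subst h; exact Or.inr h'
      · subst h'; exact Or.inr (by rw [h])
      · subst h; subst h'; exact Or.inl (hinv a)
  let st : Setoid α := ⟨r, requiv⟩
  let χ : α → ℤ := fun a => if (Quotient.out (s := st) (Quotient.mk st a)) = a then 1 else -1
  refine ⟨χ, fun a => by by_cases h : (Quotient.out (s := st) (Quotient.mk st a)) = a <;>
    simp [χ, h], ?_⟩
  intro a
  have hmk : (Quotient.mk st (F a)) = Quotient.mk st a := by
    apply Quotient.sound
    exact Or.inr (hinv a).symm
  have hout : r (Quotient.out (s := st) (Quotient.mk st a)) a := by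
    have := Quotient.exact (Quotient.out_eq (s := st) (Quotient.mk st a))
    exact this
  rcases hout with h | h
  · -- out = a
    have h1 : (Quotient.out (s := st) (Quotient.mk st a)) = a := h.symm
    have h2 : (Quotient.out (s := st) (Quotient.mk st (F a))) ≠ F a := by
      rw [hmk, h1]; exact fun hh => hfpf a hh.symm
    simp [χ, h1, h2]
  · -- a = F out, so out = F a
    have h1 : (Quotient.out (s := st) (Quotient.mk st a)) = F a := by
      conv_rhs => rw [h]
      exact (hinv _).symm
    have h2 : (Quotient.out (s := st) (Quotient.mk st a)) ≠ a := by
      rw [h1]; exact hfpf a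
    have h3 : (Quotient.out (s := st) (Quotient.mk st (F a))) = F a := by
      rw [hmk]; exact h1
    have e1 : χ (F a) = 1 := by simp only [χ]; rw [if_pos h3]
    have e2 : χ a = -1 := by simp only [χ]; rw [if_neg h2]
    rw [e1, e2]; ring

/-- Sidedness function for a pair of fixed-point-free involutions. -/
lemma sidedness {V : Type*} (p q : V → V)
    (hp : Function.Involutive p) (hq : Function.Involutive q)
    (hpf : ∀ v, p v ≠ v) (hqf : ∀ v, q v ≠ v) :
    ∃ ε : V → ℤ, (∀ v, ε v = 1 ∨ ε v = -1) ∧ (∀ v, ε (p v) = -ε v) ∧ (∀ v, ε (q v) = -ε v) := by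
  classical
  let P : Equiv.Perm V := hp.toPerm
  let Q : Equiv.Perm V := hq.toPerm
  have hPapp : ∀ v, P v = p v := fun v => rfl
  have hQapp : ∀ v, Q v = q v := fun v => rfl
  have hP2 : P * P = 1 := by ext v; simp only [Equiv.Perm.mul_apply, Equiv.Perm.one_apply]; exact hp v
  have hQ2 : Q * Q = 1 := by ext v; simp only [Equiv.Perm.mul_apply, Equiv.Perm.one_apply]; exact hq v
  have hPinv : P⁻¹ = P := by rw [eq_comm, eq_inv_iff_mul_eq_one, hP2]
  have hQinv : Q⁻¹ = Q := by rw [eq_comm, eq_inv_iff_mul_eq_one, hQ2]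
  set s : Equiv.Perm V := P * Q with hs
  have hPQ : P * s = Q := by rw [hs, ← mul_assoc, hP2, one_mul]
  have hconj : ∀ k : ℤ, P * s ^ k = s ^ (-k) * P := by
    intro k
    have h1 : (MulAut.conj P) s = s⁻¹ := by
      rw [MulAut.conj_apply, hPinv, hs, mul_inv_rev, hPinv, hQinv]
      ext v
      simp only [Equiv.Perm.mul_apply]
      exact hp (Q (P v))
    have h2 : (MulAut.conj P) (s ^ k) = ((MulAut.conj P) s) ^ k := map_zpow _ _ _
    rw [h1, inv_zpow, ← zpow_neg] at h2
    rw [MulAut.conj_apply, hPinv] at h2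
    calc P * s ^ k = (P * s ^ k * P) * P := by rw [mul_assoc, hP2, mul_one]
    _ = s ^ (-k) * P := by rw [h2]
  have hnofix : ∀ v, ¬ s.SameCycle v (p v) := by
    rintro v ⟨k, hk⟩
    rcases Int.even_or_odd k with ⟨m, hm⟩ | ⟨m, hm⟩
    · -- k = 2m : p fixes (s^m) v
      apply hpf ((s ^ m) v)
      have h1 : P ((s ^ m) v) = (s ^ (-m)) (P v) := by
        rw [← Equiv.Perm.mul_apply, hconj m, Equiv.Perm.mul_apply]
      rw [hPapp] at h1
      rw [h1, hPapp, ← hk, ← Equiv.Perm.mul_apply, ← zpow_add]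
      have h2 : -m + k = m := by omega
      rw [h2]
    · -- k = 2m+1 : q fixes (s^m) v
      apply hqf ((s ^ m) v)
      have h0 : q ((s ^ m) v) = (Q * s ^ m) v := by
        rw [Equiv.Perm.mul_apply, hQapp]
      rw [h0, ← hPQ, mul_assoc, ← zpow_one_add, hconj (1 + m), Equiv.Perm.mul_apply, hPapp, ← hk,
        ← Equiv.Perm.mul_apply, ← zpow_add]
      have h2 : -(1 + m) + k = m := by omega
      rw [h2]
  -- quotient by SameCycle
  have scequiv : Equivalence s.SameCycle :=
    ⟨fun a => Equiv.Perm.SameCycle.refl s a, fun h => h.symm, fun h h' => h.trans h'⟩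
  let st : Setoid V := ⟨s.SameCycle, scequiv⟩
  let Fq : Quotient st → Quotient st :=
    Quotient.map' p (by
      rintro a b ⟨k, hk⟩
      refine ⟨-k, ?_⟩
      have h1 : P ((s ^ k) a) = (s^(-k)) (P a) := by
        rw [← Equiv.Perm.mul_apply, hconj k, Equiv.Perm.mul_apply]
      rw [hPapp, hPapp] at h1
      rw [← h1, hk])
  have hFmk : ∀ w, Fq (Quotient.mk'' w) = Quotient.mk'' (p w) := by
    intro w
    exact Quotient.map'_mk'' _ _ _
  have hFinv : ∀ t, Fq (Fq t) = t := by
    intro t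
    induction t using Quotient.inductionOn' with
    | h v =>
      rw [hFmk, hFmk, hp v]
  have hFfpf : ∀ t, Fq t ≠ t := by
    intro t
    induction t using Quotient.inductionOn' with
    | h v =>
      intro hh
      rw [hFmk] at hh
      have : s.SameCycle (p v) v := Quotient.exact' hh
      exact hnofix v this.symm
  obtain ⟨χ, hχ1, hχ2⟩ := pairing_choice Fq hFinv hFfpf
  refine ⟨fun v => χ (Quotient.mk'' v), fun v => hχ1 _, fun v => ?_, fun v => ?_⟩
  · exact hχ2 (Quotient.mk'' v)
  · -- q v = p (s v)
    have h0 : q v = p (s v) := by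
      have : (P * s) v = Q v := by rw [hPQ]
      rw [hQapp, Equiv.Perm.mul_apply, hPapp] at this
      exact this.symm
    have h1 : (Quotient.mk'' (s v) : Quotient st) = Quotient.mk'' v := by
      apply Quotient.sound'
      exact Equiv.Perm.SameCycle.symm ⟨1, by simp⟩
    have h2 : (Quotient.mk'' (q v) : Quotient st) = Fq (Quotient.mk'' (s v)) := by
      rw [h0, hFmk]
    show χ (Quotient.mk'' (q v)) = -χ (Quotient.mk'' v)
    rw [h2]
    have h3 : Fq (Quotient.mk'' (s v)) = Fq (Quotient.mk'' v) := by rw [h1]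
    rw [h3]
    exact hχ2 (Quotient.mk'' v)

/-- Generic flux identity for "antisymmetric except at two distinguished pairs" functions. -/
lemma flux {V : Type} [Fintype V] (F : V → V → ℤ) (a b x y : V) (d₁ d₂ : ℤ)
    (hab : a ≠ b) (hxy : x ≠ y)
    (h : ∀ v w, F v w + F w v =
      (if (v = a ∧ w = b) ∨ (v = b ∧ w = a) then d₁ else 0) +
      (if (v = x ∧ w = y) ∨ (v = y ∧ w = x) then d₂ else 0))
    (S : Finset V) :
    ∑ v ∈ S, ∑ w, F v w =
      (if a ∈ S ∧ b ∈ S then d₁ else 0) + (if x ∈ S ∧ y ∈ S then d₂ else 0) +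
      ∑ v ∈ S, ∑ w ∈ Sᶜ, F v w := by
  classical
  have hsplit : ∀ v, ∑ w, F v w = ∑ w ∈ S, F v w + ∑ w ∈ Sᶜ, F v w :=
    fun v => (Finset.sum_add_sum_compl S (F v)).symm
  rw [Finset.sum_congr rfl (fun v _ => hsplit v), Finset.sum_add_distrib]
  have key : ∑ v ∈ S, ∑ w ∈ S, F v w =
      (if a ∈ S ∧ b ∈ S then d₁ else 0) + (if x ∈ S ∧ y ∈ S then d₂ else 0) := by
    have h2 : (2:ℤ) * (∑ v ∈ S, ∑ w ∈ S, F v w) =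
        2 * ((if a ∈ S ∧ b ∈ S then d₁ else 0) + (if x ∈ S ∧ y ∈ S then d₂ else 0)) := by
      have hswap : ∑ v ∈ S, ∑ w ∈ S, F v w = ∑ v ∈ S, ∑ w ∈ S, F w v := Finset.sum_comm
      have lhs : (2:ℤ) * (∑ v ∈ S, ∑ w ∈ S, F v w)
          = ∑ v ∈ S, ∑ w ∈ S, (F v w + F w v) := by
        rw [two_mul]
        nth_rewrite 2 [hswap]
        rw [← Finset.sum_add_distrib]
        apply Finset.sum_congr rfl
        intro v _
        rw [← Finset.sum_add_distrib]
      rw [lhs]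
      have exp : ∀ v w, F v w + F w v =
          (if v = a then (if w = b then d₁ else 0) else 0) +
          (if v = b then (if w = a then d₁ else 0) else 0) +
          ((if v = x then (if w = y then d₂ else 0) else 0) +
           (if v = y then (if w = x then d₂ else 0) else 0)) := by
        intro v w
        rw [h v w]
        congr 1
        · by_cases h1 : v = a <;> by_cases h2 : w = b <;> by_cases h3 : v = b <;>
            by_cases h4 : w = a <;> simp_all <;> tauto
        · by_cases h1 : v = x <;> by_cases h2 : w = y <;> by_cases h3 : v = y <;>
            by_cases h4 : w = x <;> simp_all <;> tauto
      calc ∑ v ∈ S, ∑ w ∈ S, (F v w + F w v)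
          = ∑ v ∈ S, ∑ w ∈ S,
            ((if v = a then (if w = b then d₁ else 0) else 0) +
             (if v = b then (if w = a then d₁ else 0) else 0) +
             ((if v = x then (if w = y then d₂ else 0) else 0) +
              (if v = y then (if w = x then d₂ else 0) else 0))) := by
            exact Finset.sum_congr rfl fun v _ => Finset.sum_congr rfl fun w _ => exp v w
        _ = 2 * ((if a ∈ S ∧ b ∈ S then d₁ else 0) + (if x ∈ S ∧ y ∈ S then d₂ else 0)) := by
            rw [Finset.sum_congr rfl (fun v _ => by
              rw [Finset.sum_add_distrib, Finset.sum_add_distrib, Finset.sum_add_distrib])]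
            rw [Finset.sum_add_distrib, Finset.sum_add_distrib, Finset.sum_add_distrib]
            have e1 : ∀ (α β : V) (d : ℤ), ∑ v ∈ S, (if v = α then (if β ∈ S then d else 0) else 0)
                = if α ∈ S ∧ β ∈ S then d else 0 := by
              intro α β d
              rw [Finset.sum_ite_eq' S α (fun _ => if β ∈ S then d else 0)]
              by_cases h1 : α ∈ S <;> by_cases h2 : β ∈ S <;> simp [h1, h2]
            have f1 : ∀ (α β : V) (d : ℤ),
                (∑ v ∈ S, ∑ w ∈ S, (if v = α then (if w = β then d else 0) else 0))
                = if α ∈ S ∧ β ∈ S then d else 0 := by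
              intro α β d
              have : ∀ v, (∑ w ∈ S, (if v = α then (if w = β then d else 0) else 0))
                  = (if v = α then (if β ∈ S then d else 0) else 0) := by
                intro v
                by_cases hv : v = α
                · simp only [hv, if_true]
                  exact Finset.sum_ite_eq' S β (fun _ => d)
                · simp [hv]
              rw [Finset.sum_congr rfl (fun v _ => this v)]
              exact e1 α β d
            rw [f1 a b d₁, f1 b a d₁, f1 x y d₂, f1 y x d₂]
            have c1 : (b ∈ S ∧ a ∈ S) ↔ (a ∈ S ∧ b ∈ S) := and_comm
            have c2 : (y ∈ S ∧ x ∈ S) ↔ (x ∈ S ∧ y ∈ S) := and_comm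
            rw [if_congr c1 rfl rfl, if_congr c2 rfl rfl]
            ring
    exact mul_left_cancel₀ (by norm_num) h2
  rw [key]

section listlemmas
variable {V : Type}

lemma ite_factor (P Q : Prop) [Decidable P] [Decidable Q] (x : ℤ) :
    (if P then x else 0) + (if Q then x else 0) =
      x * ((if P then (1 : ℤ) else 0) + (if Q then (1 : ℤ) else 0)) := by
  by_cases h1 : P <;> by_cases h2 : Q <;> simp [h1, h2] <;> ring

lemma sum_pair_ind {V : Type} [Fintype V] (S S' : Finset V) (α β : V) (d : ℤ) :
    ∑ v ∈ S, ∑ w ∈ S', (if v = α ∧ w = β then d else 0) = if α ∈ S ∧ β ∈ S' then d else 0 := by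
  classical
  have hin : ∀ v, ∑ w ∈ S', (if v = α ∧ w = β then d else 0)
      = if v = α then (if β ∈ S' then d else 0) else 0 := by
    intro v
    by_cases hv : v = α
    · simp only [hv, true_and]
      exact Finset.sum_ite_eq' S' β (fun _ => d)
    · simp [hv]
  rw [Finset.sum_congr rfl fun v _ => hin v, Finset.sum_ite_eq' S α _]
  by_cases h1 : α ∈ S <;> by_cases h2 : β ∈ S' <;> simp [h1, h2]

lemma sum_pair_ind_or {V : Type} [Fintype V] (S S' : Finset V) (α β : V) (hαβ : α ≠ β) (d : ℤ) :
    ∑ v ∈ S, ∑ w ∈ S', (if (v = α ∧ w = β) ∨ (v = β ∧ w = α) then d else 0) =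
      (if α ∈ S ∧ β ∈ S' then d else 0) + (if β ∈ S ∧ α ∈ S' then d else 0) := by
  classical
  have hsplit : ∀ v w, (if (v = α ∧ w = β) ∨ (v = β ∧ w = α) then d else 0) =
      (if v = α ∧ w = β then d else 0) + (if v = β ∧ w = α then d else 0) := by
    intro v w
    by_cases h1 : v = α ∧ w = β <;> by_cases h2 : v = β ∧ w = α
    · exact absurd (h1.1.symm.trans h2.1) hαβ
    · rw [if_pos (Or.inl h1), if_pos h1, if_neg h2]; ring
    · rw [if_pos (Or.inr h2), if_neg h1, if_pos h2]; ring
    · rw [if_neg (by tauto), if_neg h1, if_neg h2]; ring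
  rw [Finset.sum_congr rfl fun v _ => Finset.sum_congr rfl fun w _ => hsplit v w]
  rw [Finset.sum_congr rfl fun v _ => Finset.sum_add_distrib, Finset.sum_add_distrib]
  rw [sum_pair_ind, sum_pair_ind]

/-- Extract a duplicate-free chain from reflexive-transitive closure. -/
lemma exists_nodup_chain {r : V → V → Prop} {a b : V} (h : Relation.ReflTransGen r a b) :
    ∃ L : List V, List.Chain r a L ∧ (a :: L).getLast (List.cons_ne_nil a L) = b ∧
      (a :: L).Nodup := by
  induction h with
  | refl => exact ⟨[], List.Chain.nil, rfl, List.nodup_singleton a⟩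
  | @tail m c hab hbc ih =>
    obtain ⟨L, hchain, hlast, hnodup⟩ := ih
    by_cases hc : c ∈ a :: L
    · -- cut the list at the first occurrence of c
      obtain ⟨p, t, hpt⟩ := List.append_of_mem hc
      rcases p with _ | ⟨a', p'⟩
      · -- p = [] so a = c
        simp only [List.nil_append, List.cons.injEq] at hpt
        exact ⟨[], List.Chain.nil, hpt.1, List.nodup_singleton a⟩
      · -- p = a' :: p' with a' = a
        have ha' : a = a' := by
          have := congrArg (fun l => List.head? l) hpt
          simpa using this
        rw [← ha'] at hpt
        have hpt' : L = p' ++ c :: t := by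
          have := congrArg List.tail hpt
          simpa using this
        refine ⟨p' ++ [c], ?_, ?_, ?_⟩
        · -- chain, via prefix
          have h1 : List.Chain' r (a :: L) := hchain
          have h2 : (a :: (p' ++ [c])) <+: (a :: L) := by
            rw [hpt']
            refine ⟨t, ?_⟩
            simp
          exact h1.prefix h2
        · exact List.getLast_append_singleton (a :: p')
        · have h2 : List.Sublist (a :: (p' ++ [c])) (a :: L) := by
            rw [hpt']
            refine List.Sublist.cons₂ a ?_
            exact List.Sublist.append (List.Sublist.refl p') (List.Sublist.cons₂ c (List.nil_sublist t))
          exact hnodup.sublist h2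
    · -- append c
      refine ⟨L ++ [c], ?_, ?_, ?_⟩
      · have h1 : List.Chain' r (a :: L) := hchain
        have h2 : List.Chain' r ((a :: L) ++ [c]) := by
          show List.IsChain r ((a :: L) ++ [c])
          rw [List.isChain_append]
          refine ⟨h1, List.isChain_singleton c, ?_⟩
          intro pp hp qq hq
          simp only [List.head?_cons, Option.mem_def, Option.some.injEq] at hq
          rw [List.getLast?_eq_getLast (List.cons_ne_nil a L)] at hp
          simp only [Option.mem_def, Option.some.injEq] at hp
          subst hp
          rw [hlast, ← hq]
          exact hbc
        exact h2
      · exact List.getLast_append_singleton (a :: L)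
      · rw [show a :: (L ++ [c]) = (a :: L) ++ [c] by simp]
        rw [List.nodup_append]
        refine ⟨hnodup, List.nodup_singleton c, ?_⟩
        intro p hp q hq
        simp only [List.mem_singleton] at hq
        subst hq
        exact fun h => hc (h ▸ hp)

/-- The correction flow of a path, as a function on ordered pairs. -/
noncomputable def corrL : List V → V → V → ℤ
  | [], _, _ => 0
  | [_], _, _ => 0
  | z₁ :: z₂ :: rest, v, w =>
    (if v = z₁ ∧ w = z₂ then -2 else 0) + (if v = z₂ ∧ w = z₁ then 2 else 0) +
      corrL (z₂ :: rest) v w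

@[simp] lemma corrL_nil (v w : V) : corrL [] v w = 0 := by rw [corrL]
@[simp] lemma corrL_single (z v w : V) : corrL [z] v w = 0 := by rw [corrL]
lemma corrL_cons₂ (z₁ z₂ : V) (rest : List V) (v w : V) :
    corrL (z₁ :: z₂ :: rest) v w =
    (if v = z₁ ∧ w = z₂ then -2 else 0) + (if v = z₂ ∧ w = z₁ then 2 else 0) +
      corrL (z₂ :: rest) v w := by rw [corrL]

lemma corrL_antisymm (l : List V) (v w : V) : corrL l w v = - corrL l v w := by
  induction l with
  | nil => simp
  | cons z₁ rest ih =>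
    rcases rest with _ | ⟨z₂, rest'⟩
    · simp
    · rw [corrL_cons₂, corrL_cons₂, ih]
      have A : (if w = z₁ ∧ v = z₂ then (-2:ℤ) else 0) = -(if v = z₂ ∧ w = z₁ then (2:ℤ) else 0) := by
        by_cases h : v = z₂ ∧ w = z₁
        · rw [if_pos h, if_pos ⟨h.2, h.1⟩] <;> try ring
        · rw [if_neg h, if_neg (fun hh => h ⟨hh.2, hh.1⟩)] <;> try ring
      have B : (if w = z₂ ∧ v = z₁ then (2:ℤ) else 0) = -(if v = z₁ ∧ w = z₂ then (-2:ℤ) else 0) := by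
        by_cases h : v = z₁ ∧ w = z₂
        · rw [if_pos h, if_pos ⟨h.2, h.1⟩] <;> try ring
        · rw [if_neg h, if_neg (fun hh => h ⟨hh.2, hh.1⟩)] <;> try ring
      rw [A, B]; ring

lemma corrL_vanish_left (l : List V) (v : V) (hv : v ∉ l) (w : V) : corrL l v w = 0 := by
  induction l with
  | nil => simp
  | cons z₁ rest ih =>
    rcases rest with _ | ⟨z₂, rest'⟩
    · simp
    · rw [corrL_cons₂]
      have h1 : v ≠ z₁ := fun h => hv (h ▸ List.mem_cons_self)
      have h2 : v ≠ z₂ := fun h => hv (by simp [h])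
      have h3 : v ∉ z₂ :: rest' := fun h => hv (List.mem_cons_of_mem _ h)
      rw [ih h3]
      simp [h1, h2]

lemma corrL_vanish_right (l : List V) (v : V) (hv : v ∉ l) (w : V) : corrL l w v = 0 := by
  rw [corrL_antisymm, corrL_vanish_left l v hv w, neg_zero]

/-- values of the correction flow, with direction information. -/
lemma corrL_values {r : V → V → Prop} (l : List V) (hch : List.Chain' r l) (hnd : l.Nodup)
    (v w : V) :
    corrL l v w = 0 ∨ (corrL l v w = -2 ∧ r v w) ∨ (corrL l v w = 2 ∧ r w v) := by
  induction l with
  | nil => left; simp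
  | cons z₁ rest ih =>
    rcases rest with _ | ⟨z₂, rest'⟩
    · left; simp
    · have hstep : r z₁ z₂ := (List.isChain_cons_cons.mp hch).1
      have hch' : List.Chain' r (z₂ :: rest') := (List.isChain_cons_cons.mp hch).2
      have hnd' : (z₂ :: rest').Nodup := hnd.of_cons
      have hz1 : z₁ ∉ z₂ :: rest' := (List.nodup_cons.mp hnd).1
      rw [corrL_cons₂]
      by_cases h1 : v = z₁ ∧ w = z₂
      · obtain ⟨hv, hw⟩ := h1
        subst hv; subst hw
        have hne : v ≠ w := fun h => hz1 (h ▸ List.mem_cons_self)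
        have h2 : ¬(v = w ∧ w = v) := fun ⟨h, _⟩ => hne h
        rw [corrL_vanish_left _ _ hz1]
        right; left
        exact ⟨by simp [h2], hstep⟩
      · by_cases h2 : v = z₂ ∧ w = z₁
        · obtain ⟨hv, hw⟩ := h2
          subst hv; subst hw
          have hne : w ≠ v := fun h => hz1 (h ▸ List.mem_cons_self)
          have h3 : ¬(v = w ∧ w = v) := fun ⟨h, _⟩ => hne h.symm
          rw [corrL_vanish_right _ _ hz1]
          right; right
          exact ⟨by simp [h3], hstep⟩
        · rw [if_neg h1, if_neg h2]
          simp only [add_zero, zero_add]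
          exact ih hch' hnd'

/-- the row sums of the correction flow telescope. -/
lemma corrL_rowsum [Fintype V] (l : List V) (hl : l ≠ []) (v : V) :
    ∑ w, corrL l v w =
      (if v = l.head hl then -2 else 0) + (if v = l.getLast hl then 2 else 0) := by
  induction l with
  | nil => exact absurd rfl hl
  | cons z₁ rest ih =>
    rcases rest with _ | ⟨z₂, rest'⟩
    · simp only [corrL_single, Finset.sum_const_zero]
      have hh : [z₁].head (List.cons_ne_nil z₁ []) = z₁ := rfl
      have hg : [z₁].getLast (List.cons_ne_nil z₁ []) = z₁ := rfl
      rw [hh, hg]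
      by_cases h : v = z₁ <;> simp [h]
    · rw [Finset.sum_congr rfl (fun w _ => corrL_cons₂ z₁ z₂ rest' v w)]
      rw [Finset.sum_add_distrib, Finset.sum_add_distrib]
      rw [ih (List.cons_ne_nil z₂ rest')]
      have e1 : ∑ w, (if v = z₁ ∧ w = z₂ then (-2:ℤ) else 0) = if v = z₁ then -2 else 0 := by
        by_cases h : v = z₁
        · simp only [h, true_and]
          rw [Finset.sum_ite_eq' Finset.univ z₂ (fun _ => (-2:ℤ))]
          simp
        · simp [h]
      have e2 : ∑ w, (if v = z₂ ∧ w = z₁ then (2:ℤ) else 0) = if v = z₂ then 2 else 0 := by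
        by_cases h : v = z₂
        · simp only [h, true_and]
          rw [Finset.sum_ite_eq' Finset.univ z₁ (fun _ => (2:ℤ))]
          simp
        · simp [h]
      rw [e1, e2]
      have hhead : (z₂ :: rest').head (List.cons_ne_nil z₂ rest') = z₂ := rfl
      have hlast : (z₂ :: rest').getLast (List.cons_ne_nil z₂ rest') =
          (z₁ :: z₂ :: rest').getLast (List.cons_ne_nil _ _) := (List.getLast_cons _).symm
      rw [hhead, hlast]
      have hh : (z₁ :: z₂ :: rest').head (List.cons_ne_nil _ _) = z₁ := rfl
      rw [hh]
      by_cases h1 : v = z₁ <;> by_cases h2 : v = z₂ <;>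
        simp only [h1, h2, if_true, if_pos, if_neg, eq_self_iff_true] <;>
        [skip; skip; skip; skip] <;> first
        | (by_cases h3 : z₁ = z₂ <;> simp [h1, h2, h3] <;> ring)
        | (simp [h1, h2] <;> ring)

end listlemmas



/-- A flow-admissible signed cubic 3-edge-colorable graph with exactly two
negative edges admits a nowhere-zero 6-flow with value 1 on both negative edges. -/
theorem stmt13 [Fintype V] (G : SimpleGraph V) (σ : Sym2 V → ℤ)
    (hσ : IsSignature G σ) (hcubic : CubicGraph G) (hadm : FlowAdmissible G σ)
    (n₁ n₂ : Sym2 V) (hne : n₁ ≠ n₂) (hN : NegEdges G σ = {n₁, n₂})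
    (c : Sym2 V → Fin 3) (hc : IsProper3EdgeColoring G c) :
    ∃ τ φ, IsNZFlow G σ 6 τ φ ∧ φ n₁ = 1 ∧ φ n₂ = 1 := by
  classical
  -- basic facts about the negative edges
  have hn1N : n₁ ∈ NegEdges G σ := by rw [hN]; exact Set.mem_insert _ _
  have hn2N : n₂ ∈ NegEdges G σ := by rw [hN]; exact Set.mem_insert_of_mem _ rfl
  have hn1E : n₁ ∈ G.edgeSet := hn1N.1
  have hn2E : n₂ ∈ G.edgeSet := hn2N.1
  have hσ1 : σ n₁ = -1 := hn1N.2
  have hσ2 : σ n₂ = -1 := hn2N.2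
  have hpos : ∀ e ∈ G.edgeSet, e ≠ n₁ → e ≠ n₂ → σ e = 1 := by
    intro e he h1 h2
    rcases hσ e he with h | h
    · exact h
    · exfalso
      have : e ∈ NegEdges G σ := ⟨he, h⟩
      rw [hN] at this
      rcases this with h' | h'
      · exact h1 h'
      · exact h2 h'
  -- the three neighbor functions
  have key : ∀ (i : Fin 3) (v : V), ∃ w, (G.Adj v w ∧ c s(v, w) = i) ∧
      ∀ w', G.Adj v w' → c s(v, w') = i → w' = w := by
    intro i v
    have hcard : (G.neighborFinset v).card = 3 := by
      have h1 := hcubic v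
      rw [Set.ncard_eq_toFinset_card'] at h1
      rw [SimpleGraph.neighborFinset_def]
      exact h1
    let f : ↥(G.neighborFinset v) → Fin 3 := fun w => c s(v, (w : V))
    have hinj : Function.Injective f := by
      intro w w' h
      by_contra hne'
      have hw : G.Adj v (w : V) := by
        have := w.2
        rwa [SimpleGraph.mem_neighborFinset] at this
      have hw' : G.Adj v (w' : V) := by
        have := w'.2
        rwa [SimpleGraph.mem_neighborFinset] at this
      have hne'' : (w : V) ≠ (w' : V) := fun hh => hne' (Subtype.ext hh)
      have hedges : s(v, (w : V)) ≠ s(v, (w' : V)) := fun hh => hne'' (Sym2.congr_right.mp hh)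
      exact hc _ (G.mem_edgeSet.mpr hw) _ (G.mem_edgeSet.mpr hw') hedges
        ⟨v, Sym2.mem_mk_left _ _, Sym2.mem_mk_left _ _⟩ h
    have hbij : Function.Bijective f := by
      rw [Fintype.bijective_iff_injective_and_card]
      refine ⟨hinj, ?_⟩
      rw [Fintype.card_coe, hcard, Fintype.card_fin]
    obtain ⟨w, hwf⟩ := hbij.2 i
    refine ⟨(w : V), ⟨?_, hwf⟩, ?_⟩
    · have := w.2
      rwa [SimpleGraph.mem_neighborFinset] at this
    · intro w' hadj hcol
      have hw'mem : w' ∈ G.neighborFinset v := (SimpleGraph.mem_neighborFinset _ _ _).mpr hadj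
      have h2 : f ⟨w', hw'mem⟩ = f w := by
        show c s(v, w') = _
        rw [hcol, hwf]
      exact congrArg Subtype.val (hinj h2)
  choose μ hμ using key
  have hμadj : ∀ i v, G.Adj v (μ i v) := fun i v => (hμ i v).1.1
  have hμcol : ∀ i v, c s(v, μ i v) = i := fun i v => (hμ i v).1.2
  have hμuniq : ∀ i v w, G.Adj v w → c s(v, w) = i → w = μ i v :=
    fun i v w h1 h2 => (hμ i v).2 w h1 h2
  have hμinvol : ∀ i, Function.Involutive (μ i) := by
    intro i v
    have h1 : G.Adj (μ i v) v := (hμadj i v).symm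
    have h2 : c s(μ i v, v) = i := by rw [Sym2.eq_swap]; exact hμcol i v
    exact (hμuniq i (μ i v) v h1 h2).symm
  have hμfpf : ∀ i v, μ i v ≠ v := fun i v h => (hμadj i v).ne h.symm
  have hμne : ∀ (i j : Fin 3) v, i ≠ j → μ i v ≠ μ j v := by
    intro i j v hij h
    apply hij
    rw [← hμcol i v, h, hμcol j v]
  have hpartner : ∀ v w, G.Adj v w → w = μ (c s(v, w)) v :=
    fun v w h => hμuniq (c s(v, w)) v w h rfl
  -- colors
  set k₁ : Fin 3 := c n₁ with hk₁
  have hktriple : ∃ k₂ k₃ : Fin 3, k₁ ≠ k₂ ∧ k₁ ≠ k₃ ∧ k₂ ≠ k₃ ∧ (c n₂ = k₁ ∨ c n₂ = k₂) := by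
    revert hk₁
    have : ∀ (p q : Fin 3), ∃ k₂ k₃ : Fin 3, p ≠ k₂ ∧ p ≠ k₃ ∧ k₂ ≠ k₃ ∧ (q = p ∨ q = k₂) := by decide
    intro _
    exact this k₁ (c n₂)
  obtain ⟨k₂, k₃, hk12, hk13, hk23, hcn2⟩ := hktriple
  have hcover : ∀ i : Fin 3, i = k₁ ∨ i = k₂ ∨ i = k₃ := fun i =>
    (by decide : ∀ (p q r j : Fin 3), p ≠ q → p ≠ r → q ≠ r → (j = p ∨ j = q ∨ j = r))
      k₁ k₂ k₃ i hk12 hk13 hk23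
  -- endpoints of the negative edges
  have hrep : ∀ e : Sym2 V, ∃ a b, e = s(a, b) := fun e =>
    Sym2.ind (fun a b => ⟨a, b, rfl⟩) e
  obtain ⟨a₁, b₁, hn1rep⟩ := hrep n₁
  obtain ⟨x₂, y₂, hn2rep⟩ := hrep n₂
  have hadj1 : G.Adj a₁ b₁ := G.mem_edgeSet.mp (hn1rep ▸ hn1E)
  have hadj2 : G.Adj x₂ y₂ := G.mem_edgeSet.mp (hn2rep ▸ hn2E)
  have hb₁ : b₁ = μ k₁ a₁ := by
    have h := hpartner a₁ b₁ hadj1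
    rw [← hn1rep, ← hk₁] at h
    exact h
  set k₂' : Fin 3 := c n₂ with hk₂'
  have hy₂ : y₂ = μ k₂' x₂ := by
    have h := hpartner x₂ y₂ hadj2
    rw [← hn2rep, ← hk₂'] at h
    exact h
  -- sidedness for the (k₁, k₂) pair
  obtain ⟨ε, hε1, hεp, hεq⟩ :=
    sidedness (μ k₁) (μ k₂) (hμinvol k₁) (hμinvol k₂) (hμfpf k₁) (hμfpf k₂)
  have hεk2' : ∀ v, ε (μ k₂' v) = -ε v := by
    intro v
    rcases hcn2 with h | h
    · rw [h]; exact hεp v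
    · rw [h]; exact hεq v
  have hεb₁ : ε b₁ = -ε a₁ := by rw [hb₁]; exact hεp a₁
  have hεy₂ : ε y₂ = -ε x₂ := by rw [hy₂]; exact hεk2' x₂
  -- the defect endpoints
  obtain ⟨u₁, o₁, hu₁ε, ho₁ε, hu1n, ho₁μ⟩ :
      ∃ u o, ε u = 1 ∧ ε o = -1 ∧ n₁ = s(u, o) ∧ o = μ k₁ u := by
    rcases hε1 a₁ with h | h
    · exact ⟨a₁, b₁, h, by rw [hεb₁, h], hn1rep, hb₁⟩
    · refine ⟨b₁, a₁, by rw [hεb₁, h]; norm_num, h, by rw [hn1rep, Sym2.eq_swap], ?_⟩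
      rw [hb₁]
      exact (hμinvol k₁ a₁).symm
  obtain ⟨u₂, o₂, hu₂ε, ho₂ε, hu2n, ho₂μ⟩ :
      ∃ u o, ε u = -1 ∧ ε o = 1 ∧ n₂ = s(u, o) ∧ o = μ k₂' u := by
    rcases hε1 x₂ with h | h
    · refine ⟨y₂, x₂, by rw [hεy₂, h], h, by rw [hn2rep, Sym2.eq_swap], ?_⟩
      rw [hy₂]
      exact (hμinvol k₂' x₂).symm
    · exact ⟨x₂, y₂, h, by rw [hεy₂, h]; norm_num, hn2rep, hy₂⟩
  have hu₁o₁ : u₁ = μ k₁ o₁ := by rw [ho₁μ]; exact (hμinvol k₁ u₁).symm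
  have hu₂o₂ : u₂ = μ k₂' o₂ := by rw [ho₂μ]; exact (hμinvol k₂' u₂).symm
  have hu12 : u₁ ≠ u₂ := fun h => by rw [h, hu₂ε] at hu₁ε; norm_num at hu₁ε
  have hadj12 : G.Adj u₁ o₁ := by rw [ho₁μ]; exact hμadj k₁ u₁
  have hadj22 : G.Adj u₂ o₂ := by rw [ho₂μ]; exact hμadj k₂' u₂
  have hu₁o₁ne : u₁ ≠ o₁ := hadj12.ne
  have hu₂o₂ne : u₂ ≠ o₂ := hadj22.ne
  -- sidedness for the (k₂, k₃) pair, normalised at u₂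
  obtain ⟨ε₀', hε₀'1, hε₀'p, hε₀'q⟩ :=
    sidedness (μ k₂) (μ k₃) (hμinvol k₂) (hμinvol k₃) (hμfpf k₂) (hμfpf k₃)
  set ε' : V → ℤ := fun v => (ε u₂ * ε₀' u₂) * ε₀' v with hε'def
  have hε'1 : ∀ v, ε' v = 1 ∨ ε' v = -1 := by
    intro v
    rcases hε₀'1 u₂ with h2 | h2 <;> rcases hε₀'1 v with h3 | h3 <;>
      simp [hε'def, h2, h3, hu₂ε]
  have hε'p : ∀ v, ε' (μ k₂ v) = -ε' v := by
    intro v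
    simp only [hε'def]
    rw [hε₀'p]
    ring
  have hε'q : ∀ v, ε' (μ k₃ v) = -ε' v := by
    intro v
    simp only [hε'def]
    rw [hε₀'q]
    ring
  have hε'u₂ : ε' u₂ = -1 := by
    simp only [hε'def]
    rcases hε₀'1 u₂ with h | h <;> rw [h, hu₂ε] <;> norm_num
  have hε'sq : ∀ v, ε' v * ε' v = 1 := by
    intro v
    rcases hε'1 v with h | h <;> rw [h] <;> norm_num
  -- the base half-edge flow
  set rv : V → Fin 3 → ℤ := fun v i =>
    if i = k₁ then ε v else if i = k₃ then -2 * ε' v else -ε v + 2 * ε' v with hrvdef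
  set Ph : V → V → ℤ := fun v w =>
    if G.Adj v w then
      (if s(v, w) = n₁ then -1 else if s(v, w) = n₂ then 1 else rv v (c s(v, w)))
    else 0 with hPhdef
  have hrv1 : ∀ v, rv v k₁ = ε v := by intro v; simp [hrvdef]
  have hrv2 : ∀ v, rv v k₂ = -ε v + 2 * ε' v := by
    intro v
    have h1 : k₂ ≠ k₁ := Ne.symm hk12
    simp [hrvdef, h1, hk23]
  have hrv3 : ∀ v, rv v k₃ = -2 * ε' v := by
    intro v
    have h1 : k₃ ≠ k₁ := Ne.symm hk13
    simp [hrvdef, h1]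
  -- slot identification
  have hslot1 : ∀ v, s(v, μ k₁ v) = n₁ ↔ (v = u₁ ∨ v = o₁) := by
    intro v
    constructor
    · intro h
      rw [hu1n] at h
      rcases Sym2.eq_iff.mp h with ⟨h1, _⟩ | ⟨h1, _⟩
      · exact Or.inl h1
      · exact Or.inr h1
    · rintro (h | h)
      · subst h; rw [hu1n, ← ho₁μ]
      · subst h; rw [← hu₁o₁, hu1n]; exact Sym2.eq_swap
  have hslot2 : ∀ v, s(v, μ k₂' v) = n₂ ↔ (v = u₂ ∨ v = o₂) := by
    intro v
    constructor
    · intro h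
      rw [hu2n] at h
      rcases Sym2.eq_iff.mp h with ⟨h1, _⟩ | ⟨h1, _⟩
      · exact Or.inl h1
      · exact Or.inr h1
    · rintro (h | h)
      · subst h; rw [hu2n, ← ho₂μ]
      · subst h; rw [← hu₂o₂, hu2n]; exact Sym2.eq_swap
  -- the three slot values
  have hA : ∀ v, Ph v (μ k₁ v) =
      if v = u₁ ∨ v = o₁ then -1 else if k₂' = k₁ ∧ (v = u₂ ∨ v = o₂) then 1 else ε v := by
    intro v
    simp only [hPhdef, hμadj k₁ v, if_true]
    by_cases h1 : v = u₁ ∨ v = o₁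
    · rw [if_pos ((hslot1 v).mpr h1), if_pos h1]
    · rw [if_neg (fun hh => h1 ((hslot1 v).mp hh)), if_neg h1]
      by_cases h2 : k₂' = k₁ ∧ (v = u₂ ∨ v = o₂)
      · have hs := hslot2 v
        rw [h2.1] at hs
        rw [if_pos (hs.mpr h2.2), if_pos h2]
      · have hne2 : s(v, μ k₁ v) ≠ n₂ := by
          intro hh
          apply h2
          have hcol2 : k₂' = k₁ := by rw [hk₂', ← hh, hμcol k₁ v]
          have hs := hslot2 v
          rw [hcol2] at hs
          exact ⟨hcol2, hs.mp hh⟩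
        rw [if_neg hne2, if_neg h2, hμcol k₁ v, hrv1]
  have hB : ∀ v, Ph v (μ k₂ v) =
      if k₂' = k₂ ∧ (v = u₂ ∨ v = o₂) then 1 else -ε v + 2 * ε' v := by
    intro v
    simp only [hPhdef, hμadj k₂ v, if_true]
    have hn1' : s(v, μ k₂ v) ≠ n₁ := by
      intro hh
      apply hk12
      rw [hk₁, ← hh, hμcol k₂ v]
    rw [if_neg hn1']
    by_cases h2 : k₂' = k₂ ∧ (v = u₂ ∨ v = o₂)
    · have hs := hslot2 v
      rw [h2.1] at hs
      rw [if_pos (hs.mpr h2.2), if_pos h2]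
    · have hne2 : s(v, μ k₂ v) ≠ n₂ := by
        intro hh
        apply h2
        have hcol2 : k₂' = k₂ := by rw [hk₂', ← hh, hμcol k₂ v]
        have hs := hslot2 v
        rw [hcol2] at hs
        exact ⟨hcol2, hs.mp hh⟩
      rw [if_neg hne2, if_neg h2, hμcol k₂ v, hrv2]
  have hC : ∀ v, Ph v (μ k₃ v) = -2 * ε' v := by
    intro v
    simp only [hPhdef, hμadj k₃ v, if_true]
    have hn1' : s(v, μ k₃ v) ≠ n₁ := by
      intro hh
      apply hk13
      rw [hk₁, ← hh, hμcol k₃ v]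
    have hn2' : s(v, μ k₃ v) ≠ n₂ := by
      intro hh
      have hcol2 : k₂' = k₃ := by rw [hk₂', ← hh, hμcol k₃ v]
      rcases hcn2 with h | h
      · exact hk13 (h ▸ hcol2)
      · exact hk23 (h ▸ hcol2)
    rw [if_neg hn1', if_neg hn2', hμcol k₃ v, hrv3]
  have hPh0 : ∀ v w, ¬G.Adj v w → Ph v w = 0 := by
    intro v w h
    simp [hPhdef, h]
  have hsum3 : ∀ v, ∑ w, Ph v w = Ph v (μ k₁ v) + Ph v (μ k₂ v) + Ph v (μ k₃ v) := by
    intro v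
    have hzero : ∀ w ∈ Finset.univ, w ∉ ({μ k₁ v, μ k₂ v, μ k₃ v} : Finset V) → Ph v w = 0 := by
      intro w _ hw
      by_cases hadj : G.Adj v w
      · exfalso
        apply hw
        have hwmu := hpartner v w hadj
        simp only [Finset.mem_insert, Finset.mem_singleton]
        rcases hcover (c s(v, w)) with h | h | h
        · left; rw [hwmu, h]
        · right; left; rw [hwmu, h]
        · right; right; rw [hwmu, h]
      · exact hPh0 v w hadj
    rw [← Finset.sum_subset (Finset.subset_univ _) hzero]
    have h1 : μ k₁ v ∉ ({μ k₂ v, μ k₃ v} : Finset V) := by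
      simp only [Finset.mem_insert, Finset.mem_singleton]
      push_neg
      exact ⟨hμne k₁ k₂ v hk12, hμne k₁ k₃ v hk13⟩
    have h2 : μ k₂ v ∉ ({μ k₃ v} : Finset V) := by
      simp only [Finset.mem_singleton]
      exact hμne k₂ k₃ v hk23
    rw [Finset.sum_insert h1, Finset.sum_insert h2, Finset.sum_singleton]
    ring
  -- disjointness of endpoints in the same-colour case
  have hdisj : k₂' = k₁ → ∀ v, (v = u₁ ∨ v = o₁) → (v = u₂ ∨ v = o₂) → False := by
    intro hsame v h1 h2
    apply hne
    have e1 : s(v, μ k₁ v) = n₁ := (hslot1 v).mpr h1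
    have hs := hslot2 v
    rw [hsame] at hs
    have e2 : s(v, μ k₁ v) = n₂ := hs.mpr h2
    rw [← e1, ← e2]
  -- the row sums of the base flow
  have hrow : ∀ v, ∑ w, Ph v w = (if v = u₁ then -2 else 0) + (if v = u₂ then 2 else 0) := by
    intro v
    rw [hsum3 v, hA v, hB v, hC v]
    have ho₁ne : o₁ ≠ u₁ := fun h => by rw [h, hu₁ε] at ho₁ε; norm_num at ho₁ε
    have ho₂ne : o₂ ≠ u₂ := fun h => by rw [h, hu₂ε] at ho₂ε; norm_num at ho₂ε
    rcases hcn2 with hsame | hdiff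
    · -- same colour
      have hcond2 : ¬(k₂' = k₂ ∧ (v = u₂ ∨ v = o₂)) := fun h => hk12 (hsame ▸ h.1)
      rw [if_neg hcond2]
      by_cases h1 : v = u₁ ∨ v = o₁
      · rw [if_pos h1]
        have hv2 : v ≠ u₂ := fun h => hdisj hsame v h1 (Or.inl h)
        rcases h1 with h | h
        · subst h
          rw [if_pos rfl, if_neg hv2, hu₁ε]
          ring
        · subst h
          rw [if_neg ho₁ne, if_neg hv2, ho₁ε]
          ring
      · rw [if_neg h1]
        by_cases h2 : k₂' = k₁ ∧ (v = u₂ ∨ v = o₂)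
        · rw [if_pos h2]
          have hv1 : v ≠ u₁ := fun h => h1 (Or.inl h)
          rcases h2.2 with h | h
          · subst h
            rw [if_neg hv1, if_pos rfl, hu₂ε]
            ring
          · subst h
            rw [if_neg hv1, if_neg ho₂ne, ho₂ε]
            ring
        · rw [if_neg h2]
          have hv1 : v ≠ u₁ := fun h => h1 (Or.inl h)
          have hv2 : v ≠ u₂ := fun h => h2 ⟨hsame, Or.inl h⟩
          rw [if_neg hv1, if_neg hv2]
          ring
    · -- different colours
      have hcond1 : ∀ P : Prop, ¬(k₂' = k₁ ∧ P) := fun P h => hk12 (h.1 ▸ hdiff ▸ rfl)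
      have hε'o₂ : ε' o₂ = 1 := by
        have : o₂ = μ k₂ u₂ := by rw [ho₂μ, hdiff]
        rw [this, hε'p, hε'u₂]
        norm_num
      by_cases h1 : v = u₁ ∨ v = o₁
      · rw [if_pos h1]
        by_cases h2 : v = u₂ ∨ v = o₂
        · rw [if_pos ⟨hdiff, h2⟩]
          rcases h1 with ha | ha <;> rcases h2 with hb | hb
          · exact absurd (ha ▸ hb.symm ▸ rfl) hu12
          · subst ha
            rw [if_pos rfl, if_neg hu12, hb, hε'o₂]
            norm_num
          · subst ha
            rw [if_neg ho₁ne, if_pos hb, hb, hε'u₂]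
            norm_num
          · exfalso
            have : ε v = -1 := ha ▸ ho₁ε
            have h2' : ε v = 1 := hb ▸ ho₂ε
            rw [h2'] at this
            norm_num at this
        · rw [if_neg (fun h => h2 h.2)]
          have hv2 : v ≠ u₂ := fun h => h2 (Or.inl h)
          rcases h1 with h | h
          · subst h
            rw [if_pos rfl, if_neg hv2, hu₁ε]
            ring
          · subst h
            rw [if_neg ho₁ne, if_neg hv2, ho₁ε]
            ring
      · rw [if_neg h1]
        rw [if_neg (hcond1 _)]
        have hv1 : v ≠ u₁ := fun h => h1 (Or.inl h)
        by_cases h2 : v = u₂ ∨ v = o₂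
        · rw [if_pos ⟨hdiff, h2⟩]
          rcases h2 with h | h
          · subst h
            rw [if_neg hv1, if_pos rfl, hu₂ε, hε'u₂]
            ring
          · subst h
            rw [if_neg hv1, if_neg ho₂ne, ho₂ε, hε'o₂]
            ring
        · rw [if_neg (fun h => h2 h.2)]
          have hv2 : v ≠ u₂ := fun h => h2 (Or.inl h)
          rw [if_neg hv1, if_neg hv2]
          ring
  -- ================== the admissible flow and its flux facts ==================
  obtain ⟨k₀, τ₀, φ₀, ⟨⟨hor₀, hkirch₀⟩, hnz₀⟩⟩ := hadm
  set F₀ : V → V → ℤ := fun v w => if G.Adj v w then τ₀ v s(v, w) * φ₀ s(v, w) else 0 with hF₀def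
  have hτ₀pm := hor₀.1
  have hτ₀neg : ∀ v w, G.Adj v w → σ s(v, w) = -1 → τ₀ v s(v, w) = τ₀ w s(v, w) := by
    intro v w hadj hneg
    have hprod := hor₀.2 v w hadj
    rw [hneg] at hprod
    rcases hτ₀pm v s(v, w) with h | h <;> rcases hτ₀pm w s(v, w) with h' | h' <;>
      rw [h, h'] at hprod ⊢ <;> norm_num at hprod <;> norm_num
  have hτ₀pos : ∀ v w, G.Adj v w → s(v, w) ≠ n₁ → s(v, w) ≠ n₂ →
      τ₀ v s(v, w) + τ₀ w s(v, w) = 0 := by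
    intro v w hadj h1 h2
    have hprod := hor₀.2 v w hadj
    rw [hpos _ (G.mem_edgeSet.mpr hadj) h1 h2] at hprod
    rcases hτ₀pm v s(v, w) with h | h <;> rcases hτ₀pm w s(v, w) with h' | h' <;>
      rw [h, h'] at hprod ⊢ <;> norm_num at hprod <;> norm_num
  set Φ₀₁ : ℤ := τ₀ u₁ n₁ * φ₀ n₁ with hΦ₀₁def
  set Φ₀₂ : ℤ := τ₀ u₂ n₂ * φ₀ n₂ with hΦ₀₂def
  have hσn1' : σ s(u₁, o₁) = -1 := by rw [← hu1n]; exact hσ1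
  have hσn2' : σ s(u₂, o₂) = -1 := by rw [← hu2n]; exact hσ2
  have hτ₀n1 : τ₀ o₁ n₁ = τ₀ u₁ n₁ := by
    have h := hτ₀neg u₁ o₁ hadj12 hσn1'
    rw [← hu1n] at h
    exact h.symm
  have hτ₀n2 : τ₀ o₂ n₂ = τ₀ u₂ n₂ := by
    have h := hτ₀neg u₂ o₂ hadj22 hσn2'
    rw [← hu2n] at h
    exact h.symm
  have hhalf1 : ∀ v w, G.Adj v w → s(v, w) = n₁ → τ₀ v s(v, w) * φ₀ s(v, w) = Φ₀₁ := by
    intro v w hadj h1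
    have hp : (v = u₁ ∧ w = o₁) ∨ (v = o₁ ∧ w = u₁) := by
      rw [hu1n] at h1
      exact Sym2.eq_iff.mp h1
    rw [h1]
    rcases hp with ⟨hv, _⟩ | ⟨hv, _⟩
    · rw [hv]
    · rw [hv, hτ₀n1]
  have hhalf2 : ∀ v w, G.Adj v w → s(v, w) = n₂ → τ₀ v s(v, w) * φ₀ s(v, w) = Φ₀₂ := by
    intro v w hadj h1
    have hp : (v = u₂ ∧ w = o₂) ∨ (v = o₂ ∧ w = u₂) := by
      rw [hu2n] at h1
      exact Sym2.eq_iff.mp h1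
    rw [h1]
    rcases hp with ⟨hv, _⟩ | ⟨hv, _⟩
    · rw [hv]
    · rw [hv, hτ₀n2]
  have hpair1ne : ∀ v w : V, ((v = u₁ ∧ w = o₁) ∨ (v = o₁ ∧ w = u₁)) → s(v, w) = n₁ := by
    rintro v w (⟨h1, h2⟩ | ⟨h1, h2⟩) <;> subst h1 <;> subst h2
    · exact hu1n.symm
    · rw [Sym2.eq_swap]; exact hu1n.symm
  have hpair2ne : ∀ v w : V, ((v = u₂ ∧ w = o₂) ∨ (v = o₂ ∧ w = u₂)) → s(v, w) = n₂ := by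
    rintro v w (⟨h1, h2⟩ | ⟨h1, h2⟩) <;> subst h1 <;> subst h2
    · exact hu2n.symm
    · rw [Sym2.eq_swap]; exact hu2n.symm
  have hpair1adj : ∀ v w : V, ((v = u₁ ∧ w = o₁) ∨ (v = o₁ ∧ w = u₁)) → G.Adj v w := by
    rintro v w (⟨h1, h2⟩ | ⟨h1, h2⟩) <;> subst h1 <;> subst h2
    · exact hadj12
    · exact hadj12.symm
  have hpair2adj : ∀ v w : V, ((v = u₂ ∧ w = o₂) ∨ (v = o₂ ∧ w = u₂)) → G.Adj v w := by
    rintro v w (⟨h1, h2⟩ | ⟨h1, h2⟩) <;> subst h1 <;> subst h2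
    · exact hadj22
    · exact hadj22.symm
  have hF₀flux : ∀ v w, F₀ v w + F₀ w v =
      (if (v = u₁ ∧ w = o₁) ∨ (v = o₁ ∧ w = u₁) then 2 * Φ₀₁ else 0) +
      (if (v = u₂ ∧ w = o₂) ∨ (v = o₂ ∧ w = u₂) then 2 * Φ₀₂ else 0) := by
    intro v w
    by_cases hadj : G.Adj v w
    · have hswap : s(w, v) = s(v, w) := Sym2.eq_swap
      by_cases h1 : s(v, w) = n₁
      · have hup : (v = u₁ ∧ w = o₁) ∨ (v = o₁ ∧ w = u₁) := by
          rw [hu1n] at h1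
          exact Sym2.eq_iff.mp h1
        have hn2' : ¬((v = u₂ ∧ w = o₂) ∨ (v = o₂ ∧ w = u₂)) := by
          intro hp
          exact hne (h1.symm.trans (hpair2ne v w hp))
        rw [if_pos hup, if_neg hn2']
        have e1 : F₀ v w = Φ₀₁ := by
          simp only [hF₀def]
          rw [if_pos hadj]
          exact hhalf1 v w hadj h1
        have e2 : F₀ w v = Φ₀₁ := by
          simp only [hF₀def]
          rw [if_pos hadj.symm]
          exact hhalf1 w v hadj.symm (hswap.trans h1)
        rw [e1, e2]
        ring
      · by_cases h2 : s(v, w) = n₂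
        · have hup : (v = u₂ ∧ w = o₂) ∨ (v = o₂ ∧ w = u₂) := by
            rw [hu2n] at h2
            exact Sym2.eq_iff.mp h2
          have hn1' : ¬((v = u₁ ∧ w = o₁) ∨ (v = o₁ ∧ w = u₁)) := by
            intro hp
            exact h1 (hpair1ne v w hp)
          rw [if_neg hn1', if_pos hup]
          have e1 : F₀ v w = Φ₀₂ := by
            simp only [hF₀def]
            rw [if_pos hadj]
            exact hhalf2 v w hadj h2
          have e2 : F₀ w v = Φ₀₂ := by
            simp only [hF₀def]
            rw [if_pos hadj.symm]
            exact hhalf2 w v hadj.symm (hswap.trans h2)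
          rw [e1, e2]
          ring
        · have hn1' : ¬((v = u₁ ∧ w = o₁) ∨ (v = o₁ ∧ w = u₁)) := fun hp => h1 (hpair1ne v w hp)
          have hn2' : ¬((v = u₂ ∧ w = o₂) ∨ (v = o₂ ∧ w = u₂)) := fun hp => h2 (hpair2ne v w hp)
          rw [if_neg hn1', if_neg hn2']
          have e : F₀ v w + F₀ w v = (τ₀ v s(v, w) + τ₀ w s(v, w)) * φ₀ s(v, w) := by
            simp only [hF₀def]
            rw [if_pos hadj, if_pos hadj.symm, hswap]
            ring
          rw [e, hτ₀pos v w hadj h1 h2]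
          ring
    · have hn1' : ¬((v = u₁ ∧ w = o₁) ∨ (v = o₁ ∧ w = u₁)) := fun hp => hadj (hpair1adj v w hp)
      have hn2' : ¬((v = u₂ ∧ w = o₂) ∨ (v = o₂ ∧ w = u₂)) := fun hp => hadj (hpair2adj v w hp)
      rw [if_neg hn1', if_neg hn2']
      have e1 : F₀ v w = 0 := by simp [hF₀def, hadj]
      have hadj' : ¬ G.Adj w v := fun h => hadj h.symm
      have e2 : F₀ w v = 0 := by simp [hF₀def, hadj']
      rw [e1, e2]
  have hrow₀ : ∀ v, ∑ w, F₀ v w = 0 := by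
    intro v
    simpa [hF₀def] using hkirch₀ v
  have hglobal : Φ₀₂ = -Φ₀₁ := by
    have h := flux F₀ u₁ o₁ u₂ o₂ (2 * Φ₀₁) (2 * Φ₀₂) hu₁o₁ne hu₂o₂ne hF₀flux Finset.univ
    rw [Finset.sum_congr rfl (fun v _ => hrow₀ v)] at h
    simp only [Finset.compl_univ, Finset.sum_empty, Finset.sum_const_zero, add_zero,
      Finset.mem_univ, true_and, if_true, and_self] at h
    linarith
  have hΦ₀₁ne : Φ₀₁ ≠ 0 := by
    apply mul_ne_zero
    · rcases hτ₀pm u₁ n₁ with h | h <;> rw [h] <;> norm_num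
    · have := (hnz₀ n₁ hn1E).1
      intro h
      rw [h] at this
      norm_num at this
  have hΦ₀₂ne : Φ₀₂ ≠ 0 := by
    apply mul_ne_zero
    · rcases hτ₀pm u₂ n₂ with h | h <;> rw [h] <;> norm_num
    · have := (hnz₀ n₂ hn2E).1
      intro h
      rw [h] at this
      norm_num at this
  -- ================== the base flow's pair flux identity ==================
  have hrvanti : ∀ (i : Fin 3) v, rv v i + rv (μ i v) i = 0 := by
    intro i v
    rcases hcover i with h | h | h <;> subst h
    · rw [hrv1, hrv1, hεp]; ring
    · rw [hrv2, hrv2, hεq, hε'p]; ring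
    · rw [hrv3, hrv3, hε'q]; ring
  have hPhpair : ∀ v w, Ph v w + Ph w v =
      (if (v = u₁ ∧ w = o₁) ∨ (v = o₁ ∧ w = u₁) then -2 else 0) +
      (if (v = u₂ ∧ w = o₂) ∨ (v = o₂ ∧ w = u₂) then 2 else 0) := by
    intro v w
    by_cases hadj : G.Adj v w
    · have hswap : s(w, v) = s(v, w) := Sym2.eq_swap
      by_cases h1 : s(v, w) = n₁
      · have hup : (v = u₁ ∧ w = o₁) ∨ (v = o₁ ∧ w = u₁) := by
          rw [hu1n] at h1
          exact Sym2.eq_iff.mp h1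
        have hn2' : ¬((v = u₂ ∧ w = o₂) ∨ (v = o₂ ∧ w = u₂)) := by
          intro hp
          exact hne (h1.symm.trans (hpair2ne v w hp))
        rw [if_pos hup, if_neg hn2']
        have e1 : Ph v w = -1 := by
          simp only [hPhdef]
          rw [if_pos hadj, if_pos h1]
        have e2 : Ph w v = -1 := by
          simp only [hPhdef]
          rw [if_pos hadj.symm, if_pos (hswap.trans h1)]
        rw [e1, e2]
        ring
      · by_cases h2 : s(v, w) = n₂
        · have hup : (v = u₂ ∧ w = o₂) ∨ (v = o₂ ∧ w = u₂) := by
            rw [hu2n] at h2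
            exact Sym2.eq_iff.mp h2
          have hn1' : ¬((v = u₁ ∧ w = o₁) ∨ (v = o₁ ∧ w = u₁)) := fun hp => h1 (hpair1ne v w hp)
          rw [if_neg hn1', if_pos hup]
          have e1 : Ph v w = 1 := by
            simp only [hPhdef]
            rw [if_pos hadj, if_neg h1, if_pos h2]
          have e2 : Ph w v = 1 := by
            simp only [hPhdef]
            rw [if_pos hadj.symm, if_neg (fun hh => h1 (hswap ▸ hh)), if_pos (hswap.trans h2)]
          rw [e1, e2]
          norm_num
        · have hn1' : ¬((v = u₁ ∧ w = o₁) ∨ (v = o₁ ∧ w = u₁)) := fun hp => h1 (hpair1ne v w hp)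
          have hn2' : ¬((v = u₂ ∧ w = o₂) ∨ (v = o₂ ∧ w = u₂)) := fun hp => h2 (hpair2ne v w hp)
          rw [if_neg hn1', if_neg hn2']
          have hwmu : w = μ (c s(v, w)) v := hpartner v w hadj
          have e1 : Ph v w = rv v (c s(v, w)) := by
            simp only [hPhdef]
            rw [if_pos hadj, if_neg h1, if_neg h2]
          have e2 : Ph w v = rv w (c s(v, w)) := by
            simp only [hPhdef]
            rw [if_pos hadj.symm, if_neg (fun hh => h1 (hswap ▸ hh)),
              if_neg (fun hh => h2 (hswap ▸ hh)), hswap]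
          rw [e1, e2]
          have := hrvanti (c s(v, w)) v
          rw [← hwmu] at this
          linarith
    · have hn1' : ¬((v = u₁ ∧ w = o₁) ∨ (v = o₁ ∧ w = u₁)) := fun hp => hadj (hpair1adj v w hp)
      have hn2' : ¬((v = u₂ ∧ w = o₂) ∨ (v = o₂ ∧ w = u₂)) := fun hp => hadj (hpair2adj v w hp)
      rw [if_neg hn1', if_neg hn2']
      rw [hPh0 v w hadj, hPh0 w v (fun h => hadj (G.adj_symm h))]
  -- ================== the reachability set ==================
  set St : V → V → Prop := fun v w => G.Adj v w ∧ s(v, w) ≠ n₁ ∧ s(v, w) ≠ n₂ ∧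
    (c s(v, w) = k₃ → ε' v = 1) with hStdef
  set T : Finset V := Finset.univ.filter (fun w => Relation.ReflTransGen St u₂ w) with hTdef
  have hu₂T : u₂ ∈ T := by
    simp only [hTdef, Finset.mem_filter, Finset.mem_univ, true_and]
    exact Relation.ReflTransGen.refl
  have hclose : ∀ v w, v ∈ T → St v w → w ∈ T := by
    intro v w hv hst
    simp only [hTdef, Finset.mem_filter, Finset.mem_univ, true_and] at hv ⊢
    exact hv.tail hst
  have hu₁T : u₁ ∈ T := by
    by_contra hu1T
    -- crossing pairs classification
    have hcross : ∀ v w, v ∈ T → w ∉ T → G.Adj v w → s(v, w) ≠ n₁ → s(v, w) ≠ n₂ →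
        (c s(v, w) = k₃ ∧ ε' v = -1) := by
      intro v w hv hw hadj h1 h2
      by_cases h3 : c s(v, w) = k₃
      · refine ⟨h3, ?_⟩
        rcases hε'1 v with h | h
        · exact absurd (hclose v w hv ⟨hadj, h1, h2, fun _ => h⟩) hw
        · exact h
      · exact absurd (hclose v w hv ⟨hadj, h1, h2, fun hh => absurd hh h3⟩) hw
    -- value of Ph on crossing pairs
    have hcrossPh : ∀ v w, v ∈ T → w ∉ T → Ph v w =
        (if (v = u₁ ∧ w = o₁) ∨ (v = o₁ ∧ w = u₁) then -1 else 0) +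
        (if (v = u₂ ∧ w = o₂) ∨ (v = o₂ ∧ w = u₂) then 1 else 0) +
        (if G.Adj v w ∧ s(v, w) ≠ n₁ ∧ s(v, w) ≠ n₂ then 2 else 0) := by
      intro v w hv hw
      by_cases hadj : G.Adj v w
      · by_cases h1 : s(v, w) = n₁
        · have hup : (v = u₁ ∧ w = o₁) ∨ (v = o₁ ∧ w = u₁) := by
            rw [hu1n] at h1
            exact Sym2.eq_iff.mp h1
          have hn2' : ¬((v = u₂ ∧ w = o₂) ∨ (v = o₂ ∧ w = u₂)) := by
            intro hp
            exact hne (h1.symm.trans (hpair2ne v w hp))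
          rw [if_pos hup, if_neg hn2', if_neg (fun hh => hh.2.1 h1)]
          simp only [hPhdef]
          rw [if_pos hadj, if_pos h1]
          ring
        · by_cases h2 : s(v, w) = n₂
          · have hup : (v = u₂ ∧ w = o₂) ∨ (v = o₂ ∧ w = u₂) := by
              rw [hu2n] at h2
              exact Sym2.eq_iff.mp h2
            have hn1' : ¬((v = u₁ ∧ w = o₁) ∨ (v = o₁ ∧ w = u₁)) := fun hp => h1 (hpair1ne v w hp)
            rw [if_neg hn1', if_pos hup, if_neg (fun hh => hh.2.2 h2)]
            simp only [hPhdef]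
            rw [if_pos hadj, if_neg h1, if_pos h2]
            ring
          · have hn1' : ¬((v = u₁ ∧ w = o₁) ∨ (v = o₁ ∧ w = u₁)) := fun hp => h1 (hpair1ne v w hp)
            have hn2' : ¬((v = u₂ ∧ w = o₂) ∨ (v = o₂ ∧ w = u₂)) := fun hp => h2 (hpair2ne v w hp)
            rw [if_neg hn1', if_neg hn2', if_pos ⟨hadj, h1, h2⟩]
            obtain ⟨hc3, he'⟩ := hcross v w hv hw hadj h1 h2
            simp only [hPhdef]
            rw [if_pos hadj, if_neg h1, if_neg h2, hc3, hrv3, he']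
            ring
      · have hn1' : ¬((v = u₁ ∧ w = o₁) ∨ (v = o₁ ∧ w = u₁)) := fun hp => hadj (hpair1adj v w hp)
        have hn2' : ¬((v = u₂ ∧ w = o₂) ∨ (v = o₂ ∧ w = u₂)) := fun hp => hadj (hpair2adj v w hp)
        rw [if_neg hn1', if_neg hn2', if_neg (fun hh => hadj hh.1), hPh0 v w hadj]
        ring
    -- the crossing set of "other" edges
    set Q : Finset (V × V) := (T ×ˢ Tᶜ).filter
      (fun p => G.Adj p.1 p.2 ∧ s(p.1, p.2) ≠ n₁ ∧ s(p.1, p.2) ≠ n₂) with hQdef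
    -- flux identity for the base flow on T
    have hPhT := flux Ph u₁ o₁ u₂ o₂ (-2) 2 hu₁o₁ne hu₂o₂ne hPhpair T
    have hLHS : ∑ v ∈ T, ∑ w, Ph v w = 2 := by
      rw [Finset.sum_congr rfl (fun v _ => hrow v), Finset.sum_add_distrib,
        Finset.sum_ite_eq' T u₁ (fun _ => (-2 : ℤ)), Finset.sum_ite_eq' T u₂ (fun _ => (2 : ℤ)),
        if_neg hu1T, if_pos hu₂T]
      ring
    have hXPh : ∑ v ∈ T, ∑ w ∈ Tᶜ, Ph v w =
        ((if u₁ ∈ T ∧ o₁ ∈ Tᶜ then (-1 : ℤ) else 0) + (if o₁ ∈ T ∧ u₁ ∈ Tᶜ then (-1 : ℤ) else 0)) +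
        ((if u₂ ∈ T ∧ o₂ ∈ Tᶜ then (1 : ℤ) else 0) + (if o₂ ∈ T ∧ u₂ ∈ Tᶜ then (1 : ℤ) else 0)) +
        2 * (Q.card : ℤ) := by
      rw [Finset.sum_congr rfl (fun v hv => Finset.sum_congr rfl (fun w hw =>
        hcrossPh v w hv (Finset.mem_compl.mp hw)))]
      rw [Finset.sum_congr rfl (fun v _ => by rw [Finset.sum_add_distrib, Finset.sum_add_distrib]),
        Finset.sum_add_distrib, Finset.sum_add_distrib]
      rw [sum_pair_ind_or T Tᶜ u₁ o₁ hu₁o₁ne (-1), sum_pair_ind_or T Tᶜ u₂ o₂ hu₂o₂ne 1]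
      congr 1
      rw [← Finset.sum_product']
      rw [← Finset.sum_filter]
      rw [Finset.sum_const]
      simp [hQdef, mul_comm]
    have hXF₀ : ∑ v ∈ T, ∑ w ∈ Tᶜ, F₀ v w =
        Φ₀₁ * ((if u₁ ∈ T ∧ o₁ ∈ Tᶜ then (1 : ℤ) else 0) + (if o₁ ∈ T ∧ u₁ ∈ Tᶜ then (1 : ℤ) else 0)) +
        Φ₀₂ * ((if u₂ ∈ T ∧ o₂ ∈ Tᶜ then (1 : ℤ) else 0) + (if o₂ ∈ T ∧ u₂ ∈ Tᶜ then (1 : ℤ) else 0)) +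
        ∑ p ∈ Q, F₀ p.1 p.2 := by
      have hdec : ∀ v w, F₀ v w =
          (if (v = u₁ ∧ w = o₁) ∨ (v = o₁ ∧ w = u₁) then Φ₀₁ else 0) +
          (if (v = u₂ ∧ w = o₂) ∨ (v = o₂ ∧ w = u₂) then Φ₀₂ else 0) +
          (if G.Adj v w ∧ s(v, w) ≠ n₁ ∧ s(v, w) ≠ n₂ then F₀ v w else 0) := by
        intro v w
        by_cases hadj : G.Adj v w
        · by_cases h1 : s(v, w) = n₁
          · have hup : (v = u₁ ∧ w = o₁) ∨ (v = o₁ ∧ w = u₁) := by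
              rw [hu1n] at h1
              exact Sym2.eq_iff.mp h1
            have hn2' : ¬((v = u₂ ∧ w = o₂) ∨ (v = o₂ ∧ w = u₂)) := by
              intro hp
              exact hne (h1.symm.trans (hpair2ne v w hp))
            rw [if_pos hup, if_neg hn2', if_neg (fun hh => hh.2.1 h1)]
            have : F₀ v w = Φ₀₁ := by
              simp only [hF₀def]
              rw [if_pos hadj]
              exact hhalf1 v w hadj h1
            rw [this]
            ring
          · by_cases h2 : s(v, w) = n₂
            · have hup : (v = u₂ ∧ w = o₂) ∨ (v = o₂ ∧ w = u₂) := by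
                rw [hu2n] at h2
                exact Sym2.eq_iff.mp h2
              have hn1' : ¬((v = u₁ ∧ w = o₁) ∨ (v = o₁ ∧ w = u₁)) := fun hp => h1 (hpair1ne v w hp)
              rw [if_neg hn1', if_pos hup, if_neg (fun hh => hh.2.2 h2)]
              have : F₀ v w = Φ₀₂ := by
                simp only [hF₀def]
                rw [if_pos hadj]
                exact hhalf2 v w hadj h2
              rw [this]
              ring
            · have hn1' : ¬((v = u₁ ∧ w = o₁) ∨ (v = o₁ ∧ w = u₁)) := fun hp => h1 (hpair1ne v w hp)
              have hn2' : ¬((v = u₂ ∧ w = o₂) ∨ (v = o₂ ∧ w = u₂)) := fun hp => h2 (hpair2ne v w hp)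
              rw [if_neg hn1', if_neg hn2', if_pos ⟨hadj, h1, h2⟩]
              ring
        · have hn1' : ¬((v = u₁ ∧ w = o₁) ∨ (v = o₁ ∧ w = u₁)) := fun hp => hadj (hpair1adj v w hp)
          have hn2' : ¬((v = u₂ ∧ w = o₂) ∨ (v = o₂ ∧ w = u₂)) := fun hp => hadj (hpair2adj v w hp)
          rw [if_neg hn1', if_neg hn2', if_neg (fun hh => hadj hh.1)]
          have : F₀ v w = 0 := by simp [hF₀def, hadj]
          rw [this]
          ring
      rw [Finset.sum_congr rfl (fun v _ => Finset.sum_congr rfl (fun w _ => hdec v w))]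
      rw [Finset.sum_congr rfl (fun v _ => by rw [Finset.sum_add_distrib, Finset.sum_add_distrib]),
        Finset.sum_add_distrib, Finset.sum_add_distrib]
      rw [sum_pair_ind_or T Tᶜ u₁ o₁ hu₁o₁ne Φ₀₁, sum_pair_ind_or T Tᶜ u₂ o₂ hu₂o₂ne Φ₀₂]
      congr 1
      · congr 1
        · exact ite_factor _ _ _
        · exact ite_factor _ _ _
      · rw [← Finset.sum_product', ← Finset.sum_filter]
    -- flux identity for F₀ on T
    have hF₀T := flux F₀ u₁ o₁ u₂ o₂ (2 * Φ₀₁) (2 * Φ₀₂) hu₁o₁ne hu₂o₂ne hF₀flux T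
    rw [Finset.sum_congr rfl (fun v _ => hrow₀ v), Finset.sum_const_zero] at hF₀T
    rw [hXF₀] at hF₀T
    rw [hLHS, hXPh] at hPhT
    -- memberships
    have hI1 : ¬(u₁ ∈ T ∧ o₁ ∈ T) := fun h => hu1T h.1
    have hJ1a : ¬(u₁ ∈ T ∧ o₁ ∈ Tᶜ) := fun h => hu1T h.1
    rw [if_neg hI1] at hPhT hF₀T
    rw [if_neg hJ1a] at hPhT hF₀T
    have hJ2b : ¬(o₂ ∈ T ∧ u₂ ∈ Tᶜ) := fun h => (Finset.mem_compl.mp h.2) hu₂T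
    rw [if_neg hJ2b] at hPhT hF₀T
    by_cases ho₂T : o₂ ∈ T
    · -- n₂ inside T
      have hI2 : u₂ ∈ T ∧ o₂ ∈ T := ⟨hu₂T, ho₂T⟩
      have hJ2a : ¬(u₂ ∈ T ∧ o₂ ∈ Tᶜ) := fun h => (Finset.mem_compl.mp h.2) ho₂T
      rw [if_pos hI2, if_neg hJ2a] at hPhT hF₀T
      by_cases ho₁T : o₁ ∈ T
      · -- n₁ also crossing-free? no: o₁ ∈ T, u₁ ∉ T : n₁ crosses
        have hJ1b : o₁ ∈ T ∧ u₁ ∈ Tᶜ := ⟨ho₁T, Finset.mem_compl.mpr hu1T⟩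
        rw [if_pos hJ1b] at hPhT hF₀T
        -- hPhT : 2 = 0 + 2 + ((0 + -1) + (0 + 0) + 2 * Q.card)  → 2*card = 1, parity
        omega
      · have hJ1b : ¬(o₁ ∈ T ∧ u₁ ∈ Tᶜ) := fun h => ho₁T h.1
        rw [if_neg hJ1b] at hPhT hF₀T
        -- hPhT : 2 = 0 + 2 + (0 + 0 + 2 * Q.card) → Q.card = 0
        have hQ0 : Q.card = 0 := by omega
        have hQempty : Q = ∅ := Finset.card_eq_zero.mp hQ0
        rw [hQempty, Finset.sum_empty] at hF₀T
        -- hF₀T : 0 = 0 + 2Φ₀₂ + (Φ₀₁ * 0 + Φ₀₂ * 0 + 0)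
        simp only [mul_zero, add_zero, zero_add, mul_zero] at hF₀T
        have : Φ₀₂ = 0 := by linarith
        exact hΦ₀₂ne this
    · have hI2 : ¬(u₂ ∈ T ∧ o₂ ∈ T) := fun h => ho₂T h.2
      have hJ2a : u₂ ∈ T ∧ o₂ ∈ Tᶜ := ⟨hu₂T, Finset.mem_compl.mpr ho₂T⟩
      rw [if_neg hI2, if_pos hJ2a] at hPhT hF₀T
      by_cases ho₁T : o₁ ∈ T
      · have hJ1b : o₁ ∈ T ∧ u₁ ∈ Tᶜ := ⟨ho₁T, Finset.mem_compl.mpr hu1T⟩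
        rw [if_pos hJ1b] at hPhT hF₀T
        -- hPhT : 2 = 0 + 0 + ((0 + -1) + (1 + 0) + 2 * card) → card = 1
        have hQ1 : Q.card = 1 := by omega
        obtain ⟨p₀, hp₀⟩ := Finset.card_eq_one.mp hQ1
        rw [hp₀, Finset.sum_singleton] at hF₀T
        -- hF₀T : 0 = 0 + 0 + (Φ₀₁ * 1 + Φ₀₂ * 1 + F₀ p₀.1 p₀.2)
        have hp₀Q : p₀ ∈ Q := by rw [hp₀]; exact Finset.mem_singleton_self p₀
        have hp₀props := (Finset.mem_filter.mp hp₀Q).2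
        have hF₀p₀ : F₀ p₀.1 p₀.2 ≠ 0 := by
          simp only [hF₀def]
          rw [if_pos hp₀props.1]
          apply mul_ne_zero
          · rcases hτ₀pm p₀.1 s(p₀.1, p₀.2) with h | h <;> rw [h] <;> norm_num
          · have := (hnz₀ s(p₀.1, p₀.2) (G.mem_edgeSet.mpr hp₀props.1)).1
            intro h
            rw [h] at this
            norm_num at this
        apply hF₀p₀
        have := hglobal
        linarith
      · have hJ1b : ¬(o₁ ∈ T ∧ u₁ ∈ Tᶜ) := fun h => ho₁T h.1
        rw [if_neg hJ1b] at hPhT hF₀T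
        -- hPhT : 2 = 0 + 0 + (0 + (1 + 0) + 2*card): parity contradiction
        omega
    -- ================== the correction path ==================
  have hreach : Relation.ReflTransGen St u₂ u₁ := by
    have := hu₁T
    simp only [hTdef, Finset.mem_filter, Finset.mem_univ, true_and] at this
    exact this
  obtain ⟨L, hchainL, hlastL, hnodupL⟩ := exists_nodup_chain hreach
  set P : List V := u₂ :: L with hPdef
  have hPne : P ≠ [] := List.cons_ne_nil _ _
  have hchainP : List.Chain' St P := hchainL
  have hnodupP : P.Nodup := hnodupL
  have hlastP : ∀ (h : P ≠ []), P.getLast h = u₁ := fun _ => hlastL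
  -- the corrected half-edge flow
  set Ψ : V → V → ℤ := fun v w => Ph v w + corrL P v w with hΨdef
  have hcorrSt : ∀ v w, corrL P v w = 0 ∨ (corrL P v w = -2 ∧ St v w) ∨
      (corrL P v w = 2 ∧ St w v) := fun v w => corrL_values P hchainP hnodupP v w
  have hcorrE : ∀ v w, ¬ G.Adj v w → corrL P v w = 0 := by
    intro v w h
    rcases hcorrSt v w with h0 | ⟨_, hst⟩ | ⟨_, hst⟩
    · exact h0
    · exact absurd hst.1 h
    · exact absurd hst.1.symm h
  have hAdjn1 : ∀ v w : V, s(v, w) = n₁ → G.Adj v w := fun v w h =>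
    G.mem_edgeSet.mp (h ▸ hn1E)
  have hAdjn2 : ∀ v w : V, s(v, w) = n₂ → G.Adj v w := fun v w h =>
    G.mem_edgeSet.mp (h ▸ hn2E)
  have hcorrn : ∀ v w, (s(v, w) = n₁ ∨ s(v, w) = n₂) → corrL P v w = 0 := by
    intro v w hn
    have hswap : s(w, v) = s(v, w) := Sym2.eq_swap
    rcases hcorrSt v w with h0 | ⟨_, hst⟩ | ⟨_, hst⟩
    · exact h0
    · rcases hn with h | h
      · exact absurd h hst.2.1
      · exact absurd h hst.2.2.1
    · rcases hn with h | h
      · exact absurd (hswap.trans h) hst.2.1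
      · exact absurd (hswap.trans h) hst.2.2.1
  have hΨn1 : ∀ v w, s(v, w) = n₁ → Ψ v w = -1 := by
    intro v w h1
    have hadj := hAdjn1 v w h1
    simp only [hΨdef]
    rw [hcorrn v w (Or.inl h1)]
    simp only [hPhdef]
    rw [if_pos hadj, if_pos h1]
    ring
  have hΨn2 : ∀ v w, s(v, w) = n₂ → Ψ v w = 1 := by
    intro v w h2
    have hadj := hAdjn2 v w h2
    have h1 : s(v, w) ≠ n₁ := fun h => hne (h.symm.trans h2)
    simp only [hΨdef]
    rw [hcorrn v w (Or.inr h2)]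
    simp only [hPhdef]
    rw [if_pos hadj, if_neg h1, if_pos h2]
    ring
  -- bounds on edges
  have hbound : ∀ v w, G.Adj v w → 0 < |Ψ v w| ∧ |Ψ v w| < 6 := by
    intro v w hadj
    by_cases h1 : s(v, w) = n₁
    · rw [hΨn1 v w h1]; norm_num
    · by_cases h2 : s(v, w) = n₂
      · rw [hΨn2 v w h2]; norm_num
      · have hPh' : Ph v w = rv v (c s(v, w)) := by
          simp only [hPhdef]
          rw [if_pos hadj, if_neg h1, if_neg h2]
        have hwμ : w = μ (c s(v, w)) v := hpartner v w hadj
        rcases hcover (c s(v, w)) with hcc | hcc | hcc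
        · have he : Ψ v w = ε v + corrL P v w := by
            simp only [hΨdef]
            rw [hPh', hcc, hrv1]
          rcases hε1 v with ha | ha <;>
            rcases hcorrSt v w with hb | ⟨hb, _⟩ | ⟨hb, _⟩ <;>
            rw [he, ha, hb] <;> norm_num
        · have he : Ψ v w = -ε v + 2 * ε' v + corrL P v w := by
            simp only [hΨdef]
            rw [hPh', hcc, hrv2]
          rcases hε1 v with ha | ha <;> rcases hε'1 v with ha' | ha' <;>
            rcases hcorrSt v w with hb | ⟨hb, _⟩ | ⟨hb, _⟩ <;>
            rw [he, ha, ha', hb] <;> norm_num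
        · have he : Ψ v w = -2 * ε' v + corrL P v w := by
            simp only [hΨdef]
            rw [hPh', hcc, hrv3]
          rcases hcorrSt v w with hb | ⟨hb, hst⟩ | ⟨hb, hst⟩
          · rw [he, hb]
            rcases hε'1 v with ha' | ha' <;> rw [ha'] <;> norm_num
          · have he' : ε' v = 1 := hst.2.2.2 hcc
            rw [he, hb, he']
            norm_num
          · have hccw : c s(w, v) = k₃ := by
              rw [show s(w, v) = s(v, w) from Sym2.eq_swap]
              exact hcc
            have he'w : ε' w = 1 := hst.2.2.2 hccw
            have hkey : ε' w = -ε' v := by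
              rw [hwμ, hcc]
              exact hε'q v
            have he'v : ε' v = -1 := by linarith
            rw [he, hb, he'v]
            norm_num
    -- antisymmetry on positive pairs
  have hPhanti : ∀ v w : V, s(v, w) ≠ n₁ → s(v, w) ≠ n₂ → Ph w v = - Ph v w := by
    intro v w h1 h2
    have h := hPhpair v w
    rw [if_neg (fun hp => h1 (hpair1ne v w hp)), if_neg (fun hp => h2 (hpair2ne v w hp))] at h
    linarith
  have hΨanti : ∀ v w : V, s(v, w) ≠ n₁ → s(v, w) ≠ n₂ → Ψ w v = - Ψ v w := by
    intro v w h1 h2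
    simp only [hΨdef]
    rw [hPhanti v w h1 h2, corrL_antisymm P v w]
    ring
  have habs : ∀ v w : V, |Ψ v w| = |Ψ w v| := by
    intro v w
    have hswap : s(w, v) = s(v, w) := Sym2.eq_swap
    by_cases h1 : s(v, w) = n₁
    · rw [hΨn1 v w h1, hΨn1 w v (hswap.trans h1)]
    · by_cases h2 : s(v, w) = n₂
      · rw [hΨn2 v w h2, hΨn2 w v (hswap.trans h2)]
      · rw [hΨanti v w h1 h2, abs_neg]
  -- the flow and orientation
  set φf : Sym2 V → ℤ := Sym2.lift ⟨fun v w => |Ψ v w|, fun v w => habs v w⟩ with hφfdef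
  have hφeval : ∀ v w : V, φf s(v, w) = |Ψ v w| := by
    intro v w
    simp only [hφfdef]
    exact Sym2.lift_mk _ v w
  set τf : V → Sym2 V → ℤ := fun v e =>
    if h : v ∈ e then (if 0 ≤ Ψ v (Sym2.Mem.other h) then 1 else -1) else 1 with hτfdef
  have hsignabs : ∀ a : ℤ, (if 0 ≤ a then (1 : ℤ) else -1) * |a| = a := by
    intro a
    rcases le_or_gt 0 a with h | h
    · rw [if_pos h, abs_of_nonneg h]; ring
    · rw [if_neg (not_le.mpr h), abs_of_neg h]; ring
  have hmemleft : ∀ v w : V, v ∈ s(v, w) := fun v w => Sym2.mem_mk_left v w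
  have hother : ∀ (v w : V) (h : v ∈ s(v, w)), Sym2.Mem.other h = w := by
    intro v w h
    exact Sym2.congr_right.mp (Sym2.other_spec h)
  have hτval : ∀ v w : V, τf v s(v, w) = (if 0 ≤ Ψ v w then 1 else -1) := by
    intro v w
    simp only [hτfdef]
    rw [dif_pos (hmemleft v w)]
    rw [hother v w (hmemleft v w)]
  have hτφ : ∀ v w : V, G.Adj v w → τf v s(v, w) * φf s(v, w) = Ψ v w := by
    intro v w _
    rw [hτval v w, hφeval v w]
    exact hsignabs _
  -- orientation properties
  have hor1 : ∀ v e, τf v e = 1 ∨ τf v e = -1 := by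
    intro v e
    simp only [hτfdef]
    by_cases h : v ∈ e
    · rw [dif_pos h]
      by_cases h' : 0 ≤ Ψ v (Sym2.Mem.other h)
      · left; rw [if_pos h']
      · right; rw [if_neg h']
    · left; rw [dif_neg h]
  have hor2 : ∀ u v, G.Adj u v → τf u s(u, v) * τf v s(u, v) = - σ s(u, v) := by
    intro u v hadj
    have hswap : s(v, u) = s(u, v) := Sym2.eq_swap
    have e1 : τf u s(u, v) = (if 0 ≤ Ψ u v then 1 else -1) := hτval u v
    have e2 : τf v s(u, v) = (if 0 ≤ Ψ v u then 1 else -1) := by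
      rw [← hswap]
      exact hτval v u
    by_cases h1 : s(u, v) = n₁
    · have hσe : σ s(u, v) = -1 := by rw [h1]; exact hσ1
      rw [e1, e2, hΨn1 u v h1, hΨn1 v u (hswap.trans h1), hσe]
      norm_num
    · by_cases h2 : s(u, v) = n₂
      · have hσe : σ s(u, v) = -1 := by rw [h2]; exact hσ2
        rw [e1, e2, hΨn2 u v h2, hΨn2 v u (hswap.trans h2), hσe]
        norm_num
      · have hσe : σ s(u, v) = 1 := hpos _ (G.mem_edgeSet.mpr hadj) h1 h2
        have hanti : Ψ v u = - Ψ u v := hΨanti u v h1 h2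
        have hnz : Ψ u v ≠ 0 := by
          have := (hbound u v hadj).1
          intro h
          rw [h] at this
          norm_num at this
        rcases lt_or_gt_of_ne hnz with h | h
        · rw [e1, e2, if_neg (not_le.mpr h), if_pos (by linarith : (0:ℤ) ≤ Ψ v u), hσe]
          norm_num
        · rw [e1, e2, if_pos (le_of_lt h), if_neg (by rw [hanti]; omega : ¬ (0:ℤ) ≤ Ψ v u), hσe]
          norm_num
  -- Kirchhoff's law
  have hkirch : ∀ v, (∑ w, if G.Adj v w then τf v s(v, w) * φf s(v, w) else 0) = 0 := by
    intro v
    have hpt : ∀ w, (if G.Adj v w then τf v s(v, w) * φf s(v, w) else 0) =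
        Ph v w + corrL P v w := by
      intro w
      by_cases hadj : G.Adj v w
      · rw [if_pos hadj, hτφ v w hadj]
      · rw [if_neg hadj, hPh0 v w hadj, hcorrE v w hadj]
        ring
    rw [Finset.sum_congr rfl (fun w _ => hpt w), Finset.sum_add_distrib, hrow v,
      corrL_rowsum P hPne v, hlastP hPne]
    have hhd : P.head hPne = u₂ := rfl
    rw [hhd]
    by_cases hv1 : v = u₁
    · by_cases hv2 : v = u₂
      · exact absurd (hv1.symm.trans hv2) hu12
      · have h12 : u₁ ≠ u₂ := hu12
        simp [hv1, hv2, h12]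
    · by_cases hv2 : v = u₂
      · have h21 : u₂ ≠ u₁ := Ne.symm hu12
        simp [hv1, hv2, h21]
      · simp [hv1, hv2]
  -- values on the negative edges
  have hφn1 : φf n₁ = 1 := by
    rw [hu1n, hφeval u₁ o₁, hΨn1 u₁ o₁ (by rw [← hu1n])]
    norm_num
  have hφn2 : φf n₂ = 1 := by
    rw [hu2n, hφeval u₂ o₂, hΨn2 u₂ o₂ (by rw [← hu2n])]
    norm_num
  -- conclusion
  refine ⟨τf, φf, ⟨⟨⟨hor1, hor2⟩, hkirch⟩, ?_⟩, hφn1, hφn2⟩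
  intro e he
  obtain ⟨v, w, hrep'⟩ := hrep e
  have hadj : G.Adj v w := G.mem_edgeSet.mp (hrep' ▸ he)
  rw [hrep', hφeval v w]
  have := hbound v w hadj
  constructor
  · rw [abs_abs]
    exact this.1
  · rw [abs_abs]
    exact this.2
end

section
/- Let (G, σ) be a flow-admissible signed cubic graph with negative edges exactly {uv, xy}, such that no 2-edge-cut of G contains a negative edge. Then the unsigned graph G* = (V(G), E(G) ∪ {ux} − {uv, xy}) is bridgeless (hence flow-admissible). -/
/-!
Let `T` be the side of a bridge `e` of `G*` containing `u`; the edges of `G` leaving `T` are among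
`uv`, `xy` and `e`. Multiplying Kirchhoff's law at each vertex by `s : V → ℤ` and summing shows
that a nowhere-zero flow admits no `s` for which exactly one edge `cd` has `s c ≠ σ(cd) s d`.
Taking `s = ±1` according to `T`: switching at `T` cannot leave exactly one negative edge; taking
`s` the indicator of a side: no side meets the rest of `G` in one edge and carries no negative
edge, and no closed part carries exactly one negative edge. Going through which of `uv`, `xy` leave
`T`, each case produces one of these configurations or a 2-edge-cut through a negative edge; in
the last case, `e = ux` being a bridge of `G`, cubicity makes the other two edges at `u` such a
cut. Adjacent negative edges are excluded beforehand by switching at their common vertex.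
-/

open Finset SimpleGraph

attribute [local instance] Classical.propDecidable

variable {V : Type}

open scoped symmDiff

namespace SimpleGraph

def cutEdges (G : SimpleGraph V) (T : Set V) : Set (Sym2 V) :=
  {e | e ∈ G.edgeSet ∧ ∃ a ∈ T, ∃ b ∈ Tᶜ, e = s(a, b)}

variable {G H : SimpleGraph V} {T : Set V}

theorem mk_mem_cutEdges {a b : V} : s(a, b) ∈ G.cutEdges T ↔ G.Adj a b ∧ (a ∈ T ↔ b ∉ T) := by
  constructor
  · rintro ⟨h, c, hc, d, hd, he⟩
    rcases Sym2.eq_iff.mp he with ⟨rfl, rfl⟩ | ⟨rfl, rfl⟩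
    · exact ⟨h, iff_of_true hc hd⟩
    · exact ⟨h, iff_of_false hd (not_not.mpr hc)⟩
  · rintro ⟨h, hab⟩
    by_cases ha : a ∈ T
    · exact ⟨h, a, ha, b, hab.mp ha, rfl⟩
    · exact ⟨h, b, of_not_not (hab.not.mp ha), a, ha, Sym2.eq_swap⟩

theorem cutEdges_subset_edgeSet : G.cutEdges T ⊆ G.edgeSet := fun _ h => h.1

theorem cutEdges_compl : G.cutEdges Tᶜ = G.cutEdges T := by
  ext e
  induction e using Sym2.ind
  simp only [mk_mem_cutEdges, Set.mem_compl_iff]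
  tauto

theorem isEdgeCut_cutEdges {e : Sym2 V} (he : e ∈ G.cutEdges T) : IsEdgeCut G (G.cutEdges T) := by
  obtain ⟨-, a, ha, b, hb, -⟩ := he
  exact ⟨T, ⟨a, ha⟩, ⟨b, hb⟩, rfl⟩

theorem cutEdges_subset_union_cutEdges_fromEdgeSet (N A : Set (Sym2 V)) :
    G.cutEdges T ⊆ N ∪ (fromEdgeSet ((G.edgeSet \ N) ∪ A)).cutEdges T := by
  intro f hf
  by_cases hfN : f ∈ N
  · exact Or.inl hfN
  · refine Or.inr ⟨?_, hf.2⟩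
    rw [edgeSet_fromEdgeSet]
    exact ⟨Or.inl ⟨hf.1, hfN⟩, G.not_isDiag_of_mem_edgeSet hf.1⟩

theorem cutEdges_singleton (w : V) : G.cutEdges {w} = (fun z => s(w, z)) '' G.neighborSet w := by
  ext e
  induction e using Sym2.ind with | _ a b => ?_
  simp only [mk_mem_cutEdges, Set.mem_singleton_iff, Set.mem_image, mem_neighborSet, Sym2.eq_iff]
  constructor
  · rintro ⟨h, hab⟩
    by_cases ha : a = w
    · exact ⟨b, ha ▸ h, Or.inl ⟨ha.symm, rfl⟩⟩
    · obtain rfl : b = w := of_not_not (hab.not.mp ha)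
      exact ⟨a, h.symm, Or.inr ⟨rfl, rfl⟩⟩
  · rintro ⟨z, hz, ⟨rfl, rfl⟩ | ⟨rfl, rfl⟩⟩
    · exact ⟨hz, by simp [hz.ne']⟩
    · exact ⟨hz.symm, by simp [hz.ne']⟩

theorem cutEdges_symmDiff (A B : Set V) : G.cutEdges (A ∆ B) = G.cutEdges A ∆ G.cutEdges B := by
  ext e
  induction e using Sym2.ind with | _ a b => ?_
  simp only [Set.mem_symmDiff, mk_mem_cutEdges]
  tauto

theorem exists_cutEdges_eq_singleton_of_isBridge {a b : V} (hab : H.Adj a b)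
    (hbr : H.IsBridge s(a, b)) (u : V) : ∃ T : Set V, u ∈ T ∧ H.cutEdges T = {s(a, b)} := by
  set S : Set V := {t | (H.deleteEdges {s(a, b)}).Reachable a t}
  have hS : H.cutEdges S = {s(a, b)} := by
    ext e
    induction e using Sym2.ind with | _ c d => ?_
    rw [mk_mem_cutEdges, Set.mem_singleton_iff]
    constructor
    · rintro ⟨hcd, hcross⟩
      by_contra hne
      have hreach : ∀ {p q}, p ∈ S → (H.deleteEdges {s(a, b)}).Adj p q → q ∈ S :=
        fun hp hpq => hp.trans hpq.reachable
      have hdel : (H.deleteEdges {s(a, b)}).Adj c d := by simp [hcd, hne]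
      by_cases hc : c ∈ S
      · exact hcross.mp hc (hreach hc hdel)
      · exact hc (hreach (of_not_not (hcross.not.mp hc)) hdel.symm)
    · intro h
      have hb : b ∉ S := hbr
      rcases Sym2.eq_iff.mp h with ⟨rfl, rfl⟩ | ⟨rfl, rfl⟩
      · exact ⟨hab, iff_of_true (Reachable.refl _) hb⟩
      · exact ⟨hab.symm, iff_of_false hb (not_not.mpr (Reachable.refl _))⟩
  by_cases hu : u ∈ S
  · exact ⟨S, hu, hS⟩
  · exact ⟨Sᶜ, hu, by rw [cutEdges_compl, hS]⟩

end SimpleGraph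

section Cubic

variable {G : SimpleGraph V}

theorem CubicGraph.exists_neighborSet_eq (hG : CubicGraph G) {w p q : V} (hp : G.Adj w p)
    (hq : G.Adj w q) (hpq : p ≠ q) : ∃ z, z ≠ p ∧ z ≠ q ∧ G.neighborSet w = {p, q, z} := by
  obtain ⟨z, hz, hzpq⟩ : ∃ z ∈ G.neighborSet w, z ∉ ({p, q} : Set V) := by
    refine Set.not_subset.mp fun h => ?_
    have := Set.ncard_le_ncard h
    rw [hG w, Set.ncard_pair hpq] at this
    omega
  simp only [Set.mem_insert_iff, Set.mem_singleton_iff, not_or] at hzpq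
  refine ⟨z, hzpq.1, hzpq.2, (Set.eq_of_subset_of_ncard_le ?_ ?_ ?_).symm⟩
  · simp only [Set.insert_subset_iff, Set.singleton_subset_iff]
    exact ⟨hp, hq, hz⟩
  · rw [hG w, Set.ncard_insert_of_notMem (by simp [hpq, Ne.symm hzpq.1]),
      Set.ncard_pair (Ne.symm hzpq.2)]
  · exact Set.finite_of_ncard_pos (by rw [hG w]; norm_num)

theorem CubicGraph.exists_cutEdges_symmDiff_eq_pair (hG : CubicGraph G) {u v x : V}
    (hT : G.cutEdges T = {s(u, x)}) (huv : G.Adj u v) (hvx : v ≠ x) :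
    ∃ w, v ≠ w ∧ G.cutEdges (T ∆ {u}) = {s(u, v), s(u, w)} := by
  have hux : G.Adj u x := (mk_mem_cutEdges.mp (hT ▸ rfl : s(u, x) ∈ G.cutEdges T)).1
  obtain ⟨w, hwv, hwx, hu⟩ := hG.exists_neighborSet_eq huv hux hvx
  refine ⟨w, hwv.symm, ?_⟩
  rw [cutEdges_symmDiff, cutEdges_singleton, hT, hu, Set.image_insert_eq, Set.image_insert_eq,
    Set.image_singleton]
  ext f
  simp only [Set.mem_symmDiff, Set.mem_insert_iff, Set.mem_singleton_iff]
  constructor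
  · rintro (⟨rfl, h⟩ | ⟨h, hf⟩) <;> tauto
  · rintro (rfl | rfl)
    · exact Or.inr ⟨Or.inl rfl, fun h => hvx (Sym2.congr_right.mp h)⟩
    · exact Or.inr ⟨Or.inr (Or.inr rfl), fun h => hwx (Sym2.congr_right.mp h)⟩

end Cubic

section Flows

variable {G : SimpleGraph V} {σ : Sym2 V → ℤ} {τ : V → Sym2 V → ℤ} {φ : Sym2 V → ℤ}

theorem IsOrientation.mul_add_mul_eq (hτ : IsOrientation G σ τ) {c d : V} (hcd : G.Adj c d)
    (s : V → ℤ) :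
    s c * τ c s(c, d) + s d * τ d s(c, d) = τ c s(c, d) * (s c - σ s(c, d) * s d) := by
  have hsq : τ c s(c, d) * τ c s(c, d) = 1 := by rcases hτ.1 c s(c, d) with h | h <;> simp [h]
  linear_combination (-(s d * τ d s(c, d))) * hsq + (s d * τ c s(c, d)) * hτ.2 c d hcd

theorem mk_mem_negEdges {a b : V} : s(a, b) ∈ NegEdges G σ ↔ G.Adj a b ∧ σ s(a, b) = -1 :=
  Iff.rfl

variable [Fintype V]

theorem IsFlow.sum_potential_eq_zero (hf : IsFlow G σ τ φ) (s : V → ℤ) :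
    ∑ p : V × V, (if G.Adj p.1 p.2 then s p.1 * (τ p.1 s(p.1, p.2) * φ s(p.1, p.2)) else 0) = 0 := by
  rw [Fintype.sum_prod_type]
  refine Finset.sum_eq_zero fun v _ => ?_
  calc _ = s v * ∑ w, (if G.Adj v w then τ v s(v, w) * φ s(v, w) else 0) := by
        rw [Finset.mul_sum]
        exact Finset.sum_congr rfl fun w _ => (mul_ite_zero ..).symm
    _ = 0 := by rw [hf.2 v, mul_zero]

/-- Kirchhoff's law weighted by `s` and summed over all vertices reads
`∑_{cd} τ_c(cd) (s c - σ(cd) s d) φ(cd) = 0`. -/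
theorem IsFlow.apply_eq_zero_of_potential (hf : IsFlow G σ τ φ) (s : V → ℤ) {a b : V}
    (hab : G.Adj a b) (hs : ∀ c d, G.Adj c d → s(c, d) ≠ s(a, b) → s c = σ s(c, d) * s d)
    (hsab : s a ≠ σ s(a, b) * s b) : φ s(a, b) = 0 := by
  set g : V × V → ℤ := fun p =>
    if G.Adj p.1 p.2 then s p.1 * (τ p.1 s(p.1, p.2) * φ s(p.1, p.2)) else 0
  set h : V × V → ℤ := fun p => g p + g p.swap
  have hh : ∀ c d, h (c, d) =
      if G.Adj c d then τ c s(c, d) * (s c - σ s(c, d) * s d) * φ s(c, d) else 0 := by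
    intro c d
    simp only [h, g, Prod.swap, adj_comm G d c, Sym2.eq_swap (a := d)]
    split_ifs with hcd
    · rw [← (hf.1.mul_add_mul_eq hcd s)]; ring
    · simp
  have hsum : ∑ p, h p = 0 := by
    rw [Finset.sum_add_distrib, show ∑ p : V × V, g p.swap = ∑ p, g p from
      Equiv.sum_comp (Equiv.prodComm V V) g, hf.sum_potential_eq_zero s, add_zero]
  rw [Fintype.sum_eq_add (a, b) (b, a) (by simp [hab.ne])] at hsum
  · rw [show h (b, a) = h (a, b) from add_comm _ _, hh, if_pos hab] at hsum
    have hτ : τ a s(a, b) ≠ 0 := by rcases hf.1.1 a s(a, b) with h | h <;> simp [h]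
    simpa [hτ, sub_ne_zero.mpr hsab] using hsum
  · rintro ⟨c, d⟩ ⟨h1, h2⟩
    rw [hh]
    split_ifs with hcd
    · by_cases he : s(c, d) = s(a, b)
      · rcases Sym2.eq_iff.mp he with ⟨rfl, rfl⟩ | ⟨rfl, rfl⟩ <;> simp at h1 h2
      · rw [hs c d hcd he]; ring
    · rfl

theorem FlowAdmissible.eq_mul_of_potential (hadm : FlowAdmissible G σ) (s : V → ℤ) {a b : V}
    (hab : G.Adj a b) (hs : ∀ c d, G.Adj c d → s(c, d) ≠ s(a, b) → s c = σ s(c, d) * s d) :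
    s a = σ s(a, b) * s b := by
  obtain ⟨k, τ, φ, hf, hnz⟩ := hadm
  by_contra hsab
  have := (hnz s(a, b) hab).1
  rw [hf.apply_eq_zero_of_potential s hab hs hsab, abs_zero] at this
  exact this.false

theorem FlowAdmissible.ne_singleton_of_potential (hadm : FlowAdmissible G σ) (s : V → ℤ)
    {D : Set (Sym2 V)} (hDG : D ⊆ G.edgeSet)
    (hD : ∀ c d, G.Adj c d → (s(c, d) ∈ D ↔ s c ≠ σ s(c, d) * s d)) (e : Sym2 V) : D ≠ {e} := by
  intro h
  have he : e ∈ G.edgeSet := hDG (h ▸ rfl)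
  induction e using Sym2.ind with | _ a b => ?_
  refine (hD a b he).mp (h ▸ rfl) (hadm.eq_mul_of_potential s he fun c d hcd hne => ?_)
  exact not_not.mp ((hD c d hcd).not.mp (by rw [h]; exact hne))

/-- Switching at `T` changes the set of negative edges to this symmetric difference. -/
theorem FlowAdmissible.symmDiff_cutEdges_negEdges_ne_singleton (hadm : FlowAdmissible G σ)
    (hσ : IsSignature G σ) (T : Set V) (e : Sym2 V) :
    G.cutEdges T ∆ NegEdges G σ ≠ {e} := by
  refine hadm.ne_singleton_of_potential (fun t => if t ∈ T then 1 else -1)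
    (fun f hf => hf.elim (·.1.1) (·.1.1)) (fun c d hcd => ?_) e
  rw [Set.mem_symmDiff, mk_mem_cutEdges, mk_mem_negEdges]
  rcases hσ s(c, d) hcd with h | h <;> by_cases hc : c ∈ T <;> by_cases hd : d ∈ T <;>
    simp [h, hc, hd, hcd]

theorem FlowAdmissible.cutEdges_union_negEdges_inter_sym2_ne_singleton
    (hadm : FlowAdmissible G σ) (hσ : IsSignature G σ) (T : Set V) (e : Sym2 V) :
    G.cutEdges T ∪ (NegEdges G σ ∩ T.sym2) ≠ {e} := by
  refine hadm.ne_singleton_of_potential (fun t => if t ∈ T then 1 else 0)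
    (Set.union_subset cutEdges_subset_edgeSet fun _ h => h.1.1) (fun c d hcd => ?_) e
  rw [Set.mem_union, Set.mem_inter_iff, mk_mem_cutEdges, mk_mem_negEdges, Set.mk_mem_sym2_iff]
  rcases hσ s(c, d) hcd with h | h <;> by_cases hc : c ∈ T <;> by_cases hd : d ∈ T <;>
    simp [h, hc, hd, hcd]

end Flows

section TwoNegativeEdges

variable {G : SimpleGraph V} {σ : Sym2 V → ℤ}

theorem cutEdges_ne_pair_of_mem_negEdges
    (hcut : ∀ X, IsEdgeCut G X → X.ncard = 2 → ∀ e ∈ NegEdges G σ, e ∉ X) (T : Set V)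
    {f g : Sym2 V} (hfg : f ≠ g) (hf : f ∈ NegEdges G σ) : G.cutEdges T ≠ {f, g} := by
  intro hT
  have hfT : f ∈ G.cutEdges T := hT ▸ Or.inl rfl
  exact hcut _ (isEdgeCut_cutEdges hfT) (by rw [hT, Set.ncard_pair hfg]) f hf hfT

variable [Fintype V]

theorem FlowAdmissible.notMem_of_mem_of_negEdges_eq_pair (hadm : FlowAdmissible G σ)
    (hσ : IsSignature G σ) (hG : CubicGraph G) {f g : Sym2 V} (hN : NegEdges G σ = {f, g})
    (hfg : f ≠ g) {w : V} (hwf : w ∈ f) : w ∉ g := by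
  intro hwg
  obtain ⟨p, rfl⟩ := Sym2.mem_iff_exists.mp hwf
  obtain ⟨q, rfl⟩ := Sym2.mem_iff_exists.mp hwg
  have hp : G.Adj w p := (hN ▸ Or.inl rfl : s(w, p) ∈ NegEdges G σ).1
  have hq : G.Adj w q := (hN ▸ Or.inr rfl : s(w, q) ∈ NegEdges G σ).1
  obtain ⟨z, hzp, hzq, hw⟩ := hG.exists_neighborSet_eq hp hq (fun h => hfg (h ▸ rfl))
  refine hadm.symmDiff_cutEdges_negEdges_ne_singleton hσ {w} s(w, z) ?_
  rw [cutEdges_singleton, hw, hN, Set.image_insert_eq, Set.image_insert_eq, Set.image_singleton,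
    Set.eq_singleton_iff_unique_mem]
  refine ⟨Or.inl ⟨Or.inr (Or.inr rfl), ?_⟩, ?_⟩
  · rintro (h | h)
    exacts [hzp (Sym2.congr_right.mp h), hzq (Sym2.congr_right.mp h)]
  · rintro f (⟨hf, hfN⟩ | ⟨hfN, hf⟩)
    · rcases hf with rfl | rfl | rfl
      exacts [absurd (Or.inl rfl) hfN, absurd (Or.inr rfl) hfN, rfl]
    · rcases hfN with rfl | rfl
      exacts [absurd (Or.inl rfl) hf, absurd (Or.inr (Or.inl rfl)) hf]

/-- Whichever negative edges cross `T`, the cut is a 2-edge-cut containing a negative edge, or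
switching at `T` leaves exactly one negative edge. -/
theorem FlowAdmissible.negEdges_notMem_cutEdges (hadm : FlowAdmissible G σ)
    (hσ : IsSignature G σ)
    (hcut : ∀ X, IsEdgeCut G X → X.ncard = 2 → ∀ e ∈ NegEdges G σ, e ∉ X)
    {n₁ n₂ e : Sym2 V} (hN : NegEdges G σ = {n₁, n₂}) (hn : n₁ ≠ n₂) (he₁ : e ≠ n₁)
    (he₂ : e ≠ n₂) {T : Set V} (hT : G.cutEdges T ⊆ {n₁, n₂, e}) :
    n₁ ∉ G.cutEdges T ∧ n₂ ∉ G.cutEdges T := by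
  rw [← not_or]
  intro hcross
  wlog h₁ : n₁ ∈ G.cutEdges T generalizing n₁ n₂
  · exact this (hN.trans (Set.pair_comm _ _)) hn.symm he₂ he₁
      (hT.trans (Set.insert_comm _ _ _).subset) hcross.symm (hcross.resolve_left h₁)
  have hneg₁ : n₁ ∈ NegEdges G σ := hN ▸ Or.inl rfl
  have hneg₂ : n₂ ∈ NegEdges G σ := hN ▸ Or.inr rfl
  by_cases h₂ : n₂ ∈ G.cutEdges T <;> by_cases h₃ : e ∈ G.cutEdges T
  · refine hadm.symmDiff_cutEdges_negEdges_ne_singleton hσ T e ?_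
    rw [hN, Set.eq_singleton_iff_unique_mem]
    refine ⟨Or.inl ⟨h₃, fun h => h.elim he₁ he₂⟩, ?_⟩
    rintro f (⟨hf, hfN⟩ | ⟨hfN, hf⟩)
    · rcases hT hf with rfl | rfl | rfl
      exacts [absurd (Or.inl rfl) hfN, absurd (Or.inr rfl) hfN, rfl]
    · rcases hfN with rfl | rfl
      exacts [absurd h₁ hf, absurd h₂ hf]
  · refine cutEdges_ne_pair_of_mem_negEdges hcut T hn hneg₁ (Set.Subset.antisymm ?_ ?_)
    · intro f hf
      rcases hT hf with rfl | rfl | rfl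
      exacts [Or.inl rfl, Or.inr rfl, absurd hf h₃]
    · exact Set.insert_subset h₁ (Set.singleton_subset_iff.mpr h₂)
  · refine cutEdges_ne_pair_of_mem_negEdges hcut T he₁.symm hneg₁ (Set.Subset.antisymm ?_ ?_)
    · intro f hf
      rcases hT hf with rfl | rfl | rfl
      exacts [Or.inl rfl, absurd hf h₂, Or.inr rfl]
    · exact Set.insert_subset h₁ (Set.singleton_subset_iff.mpr h₃)
  · refine hadm.symmDiff_cutEdges_negEdges_ne_singleton hσ T n₂ ?_
    rw [hN, Set.eq_singleton_iff_unique_mem]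
    refine ⟨Or.inr ⟨Or.inr rfl, h₂⟩, ?_⟩
    rintro f (⟨hf, hfN⟩ | ⟨hfN, hf⟩)
    · rcases hT hf with rfl | rfl | rfl
      exacts [absurd (Or.inl rfl) hfN, absurd hf h₂, absurd hf h₃]
    · rcases hfN with rfl | rfl
      exacts [absurd h₁ hf, rfl]

/-- If `x ∈ T`, the side `Tᶜ` carries no negative edge and is left by the single edge `e`.
Otherwise `e = ux`: either `ux` is a bridge of `G` and the two other edges at `u` form a 2-edge-cut
through `uv`, or no edge of `G` leaves `T` and `uv` is the only negative edge inside `T`. -/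
theorem FlowAdmissible.not_cutEdges_subset_singleton (hadm : FlowAdmissible G σ)
    (hσ : IsSignature G σ) (hG : CubicGraph G)
    (hcut : ∀ X, IsEdgeCut G X → X.ncard = 2 → ∀ e ∈ NegEdges G σ, e ∉ X)
    {u v x y : V} (huv : G.Adj u v) (hN : NegEdges G σ = {s(u, v), s(x, y)}) (hvx : v ≠ x)
    {T : Set V} (hu : u ∈ T) (hv : v ∈ T) {e : Sym2 V} (hin : x ∈ T → e ∈ G.cutEdges T)
    (hout : x ∉ T → e = s(u, x)) : ¬ G.cutEdges T ⊆ {e} := by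
  intro hT
  by_cases hx : x ∈ T
  · refine hadm.cutEdges_union_negEdges_inter_sym2_ne_singleton hσ Tᶜ e ?_
    rw [cutEdges_compl, Set.Subset.antisymm hT (Set.singleton_subset_iff.mpr (hin hx)),
      Set.union_eq_left]
    rintro f ⟨hfN, hfT⟩
    rw [hN] at hfN
    rcases hfN with rfl | rfl
    exacts [absurd hu (Set.mk_mem_sym2_iff.mp hfT).1, absurd hx (Set.mk_mem_sym2_iff.mp hfT).1]
  obtain rfl := hout hx
  by_cases hux : G.Adj u x
  · have hTux : G.cutEdges T = {s(u, x)} := Set.Subset.antisymm hT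
      (Set.singleton_subset_iff.mpr (mk_mem_cutEdges.mpr ⟨hux, iff_of_true hu hx⟩))
    obtain ⟨w, hvw, hw⟩ := hG.exists_cutEdges_symmDiff_eq_pair hTux huv hvx
    exact cutEdges_ne_pair_of_mem_negEdges hcut _ (fun h => hvw (Sym2.congr_right.mp h))
      (hN ▸ Or.inl rfl) hw
  refine hadm.cutEdges_union_negEdges_inter_sym2_ne_singleton hσ T s(u, v) ?_
  have hT_empty : G.cutEdges T = ∅ :=
    Set.eq_empty_of_forall_notMem fun f hf => hux (Set.mem_singleton_iff.mp (hT hf) ▸ hf).1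
  rw [hT_empty, Set.empty_union, hN, Set.eq_singleton_iff_unique_mem]
  refine ⟨⟨Or.inl rfl, Set.mk_mem_sym2_iff.mpr ⟨hu, hv⟩⟩, ?_⟩
  rintro f ⟨rfl | rfl, hfT⟩
  exacts [rfl, absurd (Set.mk_mem_sym2_iff.mp hfT).1 hx]

theorem FlowAdmissible.cutEdges_fromEdgeSet_ne_singleton (hadm : FlowAdmissible G σ)
    (hσ : IsSignature G σ) (hG : CubicGraph G)
    (hcut : ∀ X, IsEdgeCut G X → X.ncard = 2 → ∀ e ∈ NegEdges G σ, e ∉ X)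
    {u v x y : V} (huv : G.Adj u v) (hne : s(u, v) ≠ s(x, y))
    (hN : NegEdges G σ = {s(u, v), s(x, y)}) (hux : u ≠ x) (hvx : v ≠ x) (huy : u ≠ y)
    {T : Set V} (hu : u ∈ T) (e : Sym2 V) :
    (fromEdgeSet ((G.edgeSet \ {s(u, v), s(x, y)}) ∪ {s(u, x)})).cutEdges T ≠ {e} := by
  set H := fromEdgeSet ((G.edgeSet \ {s(u, v), s(x, y)}) ∪ {s(u, x)})
  intro hT
  have heH : e ∈ H.cutEdges T := hT ▸ rfl
  have heH' : e ∈ (G.edgeSet \ {s(u, v), s(x, y)}) ∪ {s(u, x)} := by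
    have := heH.1
    rw [edgeSet_fromEdgeSet] at this
    exact this.1
  have he : e ≠ s(u, v) ∧ e ≠ s(x, y) := by
    rcases heH' with ⟨-, h⟩ | rfl
    · exact ⟨fun h' => h (Or.inl h'), fun h' => h (Or.inr h')⟩
    · refine ⟨fun h => hvx (Sym2.congr_right.mp h).symm, fun h => ?_⟩
      rcases Sym2.eq_iff.mp h with ⟨h, -⟩ | ⟨h, -⟩
      exacts [hux h, huy h]
  have hC : G.cutEdges T ⊆ {s(u, v), s(x, y), e} := fun f hf => by
    rcases cutEdges_subset_union_cutEdges_fromEdgeSet {s(u, v), s(x, y)} {s(u, x)} hf with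
      (rfl | rfl) | hfH
    exacts [Or.inl rfl, Or.inr (Or.inl rfl), Or.inr (Or.inr (hT ▸ hfH))]
  obtain ⟨huvT, hxyT⟩ := hadm.negEdges_notMem_cutEdges hσ hcut hN hne he.1 he.2 hC
  refine hadm.not_cutEdges_subset_singleton hσ hG hcut huv hN hvx hu
    (by_contra fun hv => huvT (mk_mem_cutEdges.mpr ⟨huv, iff_of_true hu hv⟩)) (e := e)
    (fun hx => ?_) (fun hx => ?_) (fun f hf => ?_)
  · rcases heH' with ⟨heG, -⟩ | rfl
    · exact ⟨heG, heH.2⟩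
    · exact absurd hx ((mk_mem_cutEdges.mp heH).2.mp hu)
  · have h : s(u, x) ∈ H.cutEdges T := mk_mem_cutEdges.mpr ⟨by simp [H, hux], iff_of_true hu hx⟩
    rw [hT] at h
    exact h.symm
  · rcases hC hf with rfl | rfl | rfl
    exacts [absurd hf huvT, absurd hf hxyT, rfl]

end TwoNegativeEdges

theorem stmt16_general [Fintype V] (G : SimpleGraph V) (σ : Sym2 V → ℤ)
    (hσ : IsSignature G σ) (hcubic : CubicGraph G) (hadm : FlowAdmissible G σ)
    (u v x y : V) (huv : G.Adj u v)
    (hne : s(u, v) ≠ s(x, y))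
    (hN : NegEdges G σ = {s(u, v), s(x, y)})
    (hcut : ∀ X, IsEdgeCut G X → X.ncard = 2 → ∀ e ∈ NegEdges G σ, e ∉ X) :
    Bridgeless
      (SimpleGraph.fromEdgeSet ((G.edgeSet \ {s(u, v), s(x, y)}) ∪ {s(u, x)})) := by
  have hdisj {w : V} := hadm.notMem_of_mem_of_negEdges_eq_pair hσ hcubic hN hne (w := w)
  have hux : u ≠ x := fun h => hdisj (Sym2.mem_mk_left u v) (h ▸ Sym2.mem_mk_left x y)
  have hvx : v ≠ x := fun h => hdisj (Sym2.mem_mk_right u v) (h ▸ Sym2.mem_mk_left x y)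
  have huy : u ≠ y := fun h => hdisj (Sym2.mem_mk_left u v) (h ▸ Sym2.mem_mk_right x y)
  rintro e he hbr
  induction e using Sym2.ind with | _ a b => ?_
  obtain ⟨T, hu, hT⟩ := exists_cutEdges_eq_singleton_of_isBridge he hbr u
  exact hadm.cutEdges_fromEdgeSet_ne_singleton hσ hcubic hcut huv hne hN hux hvx huy hu _ hT

/-- If no 2-edge-cut of a flow-admissible signed cubic graph with negative
edges `uv`, `xy` contains a negative edge, then the unsigned graph `G*` obtained by
replacing the negative edges with the single edge `ux` is bridgeless. -/
theorem stmt16 [Fintype V] (G : SimpleGraph V) (σ : Sym2 V → ℤ)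
    (hσ : IsSignature G σ) (hcubic : CubicGraph G) (hadm : FlowAdmissible G σ)
    (u v x y : V) (huv : G.Adj u v) (hxy : G.Adj x y)
    (hne : s(u, v) ≠ s(x, y))
    (hN : NegEdges G σ = {s(u, v), s(x, y)})
    (hcut : ∀ X, IsEdgeCut G X → X.ncard = 2 → ∀ e ∈ NegEdges G σ, e ∉ X) :
    Bridgeless
      (SimpleGraph.fromEdgeSet ((G.edgeSet \ {s(u, v), s(x, y)}) ∪ {s(u, x)})) :=
  stmt16_general G σ hσ hcubic hadm u v x y huv hne hN hcut
end
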